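/- arXiv:1705.07105 — 3 statements merged into one kernel-verified Lean document; each statement's English description precedes it below -/
import Mathlib

section
/- Let q be a rooted Boolean CQ and K a DL-Lite_core^bag ontology. If two e-valuations (ν¹, ν¹_S, …) and (ν², ν²_S, …) of the enumerated query q^e over the enumerated canonical bag model C(K)^e are different, then there exist an individual a, an e-atom [S(t):m] ∈ q^e, and i ∈ {1,2} such that ν^i(a) occurs among the components of ν^i(t) and ν¹_S([S(t):m]) ≠ ν²_S([S(t):m]). -/
/-!
Common formalization of the bag semantics of DL-Lite ontologies
(Nikolaou et al., "The Bag Semantics of Ontology-Based Data Access").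
-/

open scoped Classical

noncomputable section

/-- Individuals (constants). -/
abbrev Ind : Type := ℕ
/-- Variables. -/
abbrev Var : Type := ℕ
/-- Atomic concepts (unary predicates). -/
abbrev AtomicConcept : Type := ℕ
/-- Atomic roles (binary predicates). -/
abbrev AtomicRole : Type := ℕ

/-- A role is an atomic role or its inverse. -/
inductive Role where
  | atomic : AtomicRole → Role
  | inv : AtomicRole → Role
  deriving DecidableEq

/-- A concept is an atomic concept or `∃R` for a role `R`. -/
inductive DLConcept where
  | atomic : AtomicConcept → DLConcept
  | ex : Role → DLConcept
  deriving DecidableEq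

/-- TBox axioms: inclusions and disjointness axioms between concepts or roles. -/
inductive TBoxAxiom where
  | cIncl : DLConcept → DLConcept → TBoxAxiom
  | rIncl : Role → Role → TBoxAxiom
  | cDisj : DLConcept → DLConcept → TBoxAxiom
  | rDisj : Role → Role → TBoxAxiom
  deriving DecidableEq

/-- A DL-Lite_R TBox: a finite set of TBox axioms. -/
abbrev TBox : Type := Finset TBoxAxiom

/-- A DL-Lite_core TBox: only concept inclusions and concept disjointness axioms. -/
def TBox.IsCore (T : TBox) : Prop :=
  ∀ ax ∈ T, (∃ C D, ax = TBoxAxiom.cIncl C D) ∨ (∃ C D, ax = TBoxAxiom.cDisj C D)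

/-- ABox assertions. -/
inductive Assertion where
  | conceptA : AtomicConcept → Ind → Assertion
  | roleA : AtomicRole → Ind → Ind → Assertion
  deriving DecidableEq

/-- A bag ABox: a finite bag of assertions (represented as a multiset). -/
abbrev BagABox : Type := Multiset Assertion

/-- Multiplicity of an assertion in a bag ABox, as an extended natural. -/
def BagABox.mult (A : BagABox) (s : Assertion) : ℕ∞ := (A.count s : ℕ∞)

/-- Sum of an arbitrary family of extended naturals. -/
def bagSum {α : Type*} (f : α → ℕ∞) : ℕ∞ := ⨆ s : Finset α, ∑ x ∈ s, f x

/-- A bag interpretation. -/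
structure BagInterp : Type 1 where
  Δ : Type
  dne : Nonempty Δ
  indMap : Ind → Δ
  indInj : Function.Injective indMap
  cI : AtomicConcept → Δ → ℕ∞
  rI : AtomicRole → Δ → Δ → ℕ∞

/-- Extension of the interpretation function to roles. -/
def BagInterp.roleMult (I : BagInterp) : Role → I.Δ → I.Δ → ℕ∞
  | Role.atomic P => fun u v => I.rI P u v
  | Role.inv P => fun u v => I.rI P v u

/-- Extension of the interpretation function to concepts. -/
def BagInterp.conceptMult (I : BagInterp) : DLConcept → I.Δ → ℕ∞
  | DLConcept.atomic A => fun u => I.cI A u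
  | DLConcept.ex R => fun u => bagSum (fun v => I.roleMult R u v)

/-- Multiplicity of an assertion in a bag interpretation. -/
def BagInterp.assertMult (I : BagInterp) : Assertion → ℕ∞
  | Assertion.conceptA A a => I.cI A (I.indMap a)
  | Assertion.roleA P a b => I.rI P (I.indMap a) (I.indMap b)

/-- Satisfaction of a TBox axiom by a bag interpretation. -/
def BagInterp.SatisfiesAx (I : BagInterp) : TBoxAxiom → Prop
  | TBoxAxiom.cIncl C D => ∀ u, I.conceptMult C u ≤ I.conceptMult D u
  | TBoxAxiom.rIncl R S => ∀ u v, I.roleMult R u v ≤ I.roleMult S u v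
  | TBoxAxiom.cDisj C D => ∀ u, min (I.conceptMult C u) (I.conceptMult D u) = 0
  | TBoxAxiom.rDisj R S => ∀ u v, min (I.roleMult R u v) (I.roleMult S u v) = 0

/-- A DL-Lite^bag ontology. -/
structure Ontology : Type where
  tbox : TBox
  abox : BagABox

/-- `I` is a bag model of the ontology `K`. -/
def BagInterp.IsModel (I : BagInterp) (K : Ontology) : Prop :=
  (∀ ax ∈ K.tbox, I.SatisfiesAx ax) ∧
  ∀ s : Assertion, BagABox.mult K.abox s ≤ I.assertMult s

/-- Satisfiability of an ontology under bag semantics. -/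
def Ontology.Satisfiable (K : Ontology) : Prop := ∃ I : BagInterp, I.IsModel K

/- ## Conjunctive queries -/

/-- Terms: variables or individuals. -/
inductive Term where
  | var : Var → Term
  | ind : Ind → Term
  deriving DecidableEq

def Term.varsOf : Term → List Var
  | Term.var v => [v]
  | Term.ind _ => []

def Term.indsOf : Term → List Ind
  | Term.var _ => []
  | Term.ind a => [a]

/-- Query atoms: concept atoms, role atoms, and equalities. -/
inductive QAtom where
  | conceptAt : AtomicConcept → Term → QAtom
  | roleAt : AtomicRole → Term → Term → QAtom
  | eqAt : Var → Term → QAtom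
  deriving DecidableEq

def QAtom.terms : QAtom → List Term
  | QAtom.conceptAt _ t => [t]
  | QAtom.roleAt _ t₁ t₂ => [t₁, t₂]
  | QAtom.eqAt z t => [Term.var z, t]

def QAtom.vars : QAtom → List Var
  | QAtom.conceptAt _ t => t.varsOf
  | QAtom.roleAt _ t₁ t₂ => t₁.varsOf ++ t₂.varsOf
  | QAtom.eqAt z t => z :: t.varsOf

/-- A conjunctive query `q(x) = ∃y. φ(x,y)`: a tuple of answer variables,
a tuple of existential variables, and a conjunction (list, i.e. allowing
repetitions) of atoms. -/
structure CQ : Type where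
  answerVars : List Var
  existVars : List Var
  atoms : List QAtom

def CQ.vars (q : CQ) : List Var := q.answerVars ++ q.existVars

/-- Value of a term under a valuation of the variables. -/
def termVal (I : BagInterp) (f : Var → I.Δ) : Term → I.Δ
  | Term.var v => f v
  | Term.ind a => I.indMap a

/-- Multiplicity contributed by an atom under a valuation: for predicate atoms the
multiplicity of the image tuple, for equalities the indicator of satisfaction. -/
def QAtom.mult (I : BagInterp) (f : Var → I.Δ) : QAtom → ℕ∞
  | QAtom.conceptAt A t => I.cI A (termVal I f t)
  | QAtom.roleAt P t₁ t₂ => I.rI P (termVal I f t₁) (termVal I f t₂)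
  | QAtom.eqAt z t => if f z = termVal I f t then 1 else 0

/-- The bag answers `q^I(ā)`: the sum, over all valuations of the variables of `q`
mapping the answer variables to `ā` (valuations are normalized to a fixed junk
value outside the variables of `q`), of the product of the multiplicities of the
atom occurrences of `q`. -/
def CQ.bagAnswer (q : CQ) (I : BagInterp) (a : List Ind) : ℕ∞ :=
  bagSum (fun f : {f : Var → I.Δ //
      (∀ v, v ∉ q.vars → f v = I.indMap 0) ∧
      q.answerVars.map f = a.map I.indMap} =>
    (q.atoms.map (QAtom.mult I f.1)).prod)

/-- Bag certain answers: pointwise minimum over all bag models. -/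
def bagCertain (K : Ontology) (q : CQ) (a : List Ind) : ℕ∞ :=
  ⨅ (I : BagInterp) (_ : I.IsModel K), q.bagAnswer I a

/-- Base relation of the equivalence relation generated by the equality atoms. -/
def CQ.eqBase (q : CQ) : Term → Term → Prop := fun t₁ t₂ =>
  ∃ z t, QAtom.eqAt z t ∈ q.atoms ∧ t₁ = Term.var z ∧ t₂ = t

/-- Equivalence of terms generated by the equality atoms of `q`. -/
def CQ.eqRel (q : CQ) : Term → Term → Prop := Relation.EqvGen q.eqBase

/-- Safety: the class of every variable contains a term occurring in a
non-equality atom. -/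
def CQ.Safe (q : CQ) : Prop :=
  ∀ v ∈ q.vars, ∃ t : Term, ∃ atm ∈ q.atoms,
    (∀ z s, atm ≠ QAtom.eqAt z s) ∧ t ∈ QAtom.terms atm ∧ q.eqRel (Term.var v) t

/-- Well-formedness of CQs: repetition-free disjoint tuples of variables, all
variables of the atoms among the declared variables, and safety. -/
def CQ.WellFormed (q : CQ) : Prop :=
  q.answerVars.Nodup ∧ q.existVars.Nodup ∧
  (∀ v ∈ q.answerVars, v ∉ q.existVars) ∧
  (∀ atm ∈ q.atoms, ∀ v ∈ QAtom.vars atm, v ∈ q.vars) ∧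
  q.Safe

def CQ.mentionsTerm (q : CQ) (t : Term) : Prop := ∃ atm ∈ q.atoms, t ∈ QAtom.terms atm

/-- Adjacency in the Gaifman graph of `q` (on terms; equality atoms merge the
classes of their two terms, which for connectivity purposes is the same as
making them adjacent). -/
def CQ.gaifmanAdj (q : CQ) : Term → Term → Prop := fun t₁ t₂ =>
  ∃ atm ∈ q.atoms, t₁ ∈ QAtom.terms atm ∧ t₂ ∈ QAtom.terms atm

/-- A CQ is rooted if every connected component of its Gaifman graph contains
an answer variable or an individual. -/
def CQ.Rooted (q : CQ) : Prop :=
  ∀ t : Term, q.mentionsTerm t →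
    ∃ t' : Term, Relation.ReflTransGen q.gaifmanAdj t t' ∧
      ((∃ v ∈ q.answerVars, t' = Term.var v) ∨ ∃ a : Ind, t' = Term.ind a)

/- ## Set semantics -/

/-- A classical (set) interpretation. -/
structure SetInterp : Type 1 where
  Δ : Type
  dne : Nonempty Δ
  indMap : Ind → Δ
  indInj : Function.Injective indMap
  cI : AtomicConcept → Set Δ
  rI : AtomicRole → Set (Δ × Δ)

def SetInterp.roleSet (I : SetInterp) : Role → Set (I.Δ × I.Δ)
  | Role.atomic P => I.rI P
  | Role.inv P => {p | (p.2, p.1) ∈ I.rI P}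

def SetInterp.conceptSet (I : SetInterp) : DLConcept → Set I.Δ
  | DLConcept.atomic A => I.cI A
  | DLConcept.ex R => {u | ∃ v, (u, v) ∈ I.roleSet R}

def SetInterp.SatisfiesAx (I : SetInterp) : TBoxAxiom → Prop
  | TBoxAxiom.cIncl C D => I.conceptSet C ⊆ I.conceptSet D
  | TBoxAxiom.rIncl R S => I.roleSet R ⊆ I.roleSet S
  | TBoxAxiom.cDisj C D => I.conceptSet C ∩ I.conceptSet D = ∅
  | TBoxAxiom.rDisj R S => I.roleSet R ∩ I.roleSet S = ∅

def SetInterp.SatisfiesAssertion (I : SetInterp) : Assertion → Prop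
  | Assertion.conceptA A a => I.indMap a ∈ I.cI A
  | Assertion.roleA P a b => (I.indMap a, I.indMap b) ∈ I.rI P

/-- `I` is a (set) model of the TBox `T` and the set ABox `A`. -/
def SetInterp.IsModelOf (I : SetInterp) (T : TBox) (A : Finset Assertion) : Prop :=
  (∀ ax ∈ T, I.SatisfiesAx ax) ∧ ∀ s ∈ A, I.SatisfiesAssertion s

def setTermVal (I : SetInterp) (f : Var → I.Δ) : Term → I.Δ
  | Term.var v => f v
  | Term.ind a => I.indMap a

def SetInterp.SatAtom (I : SetInterp) (f : Var → I.Δ) : QAtom → Prop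
  | QAtom.conceptAt A t => setTermVal I f t ∈ I.cI A
  | QAtom.roleAt P t₁ t₂ => (setTermVal I f t₁, setTermVal I f t₂) ∈ I.rI P
  | QAtom.eqAt z t => f z = setTermVal I f t

/-- `q(ā)` holds in the set interpretation `I`. -/
def SetInterp.SatCQ (I : SetInterp) (q : CQ) (a : List Ind) : Prop :=
  ∃ f : Var → I.Δ, q.answerVars.map f = a.map I.indMap ∧ ∀ atm ∈ q.atoms, I.SatAtom f atm

/-- Entailment of a concept inclusion from a TBox (standard set semantics). -/
def TBox.EntailsCI (T : TBox) (C D : DLConcept) : Prop :=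
  ∀ I : SetInterp, (∀ ax ∈ T, I.SatisfiesAx ax) → I.conceptSet C ⊆ I.conceptSet D

/- ## The canonical bag model -/

/-- Domain elements of the canonical model: individuals and anonymous elements
`w^j_{u,R}`. -/
inductive CanElem where
  | ind : Ind → CanElem
  | anon : CanElem → Role → ℕ → CanElem
  deriving DecidableEq

def CanElem.isAnon : CanElem → Prop
  | CanElem.ind _ => False
  | CanElem.anon _ _ _ => True

/-- A stage of the canonical-model construction: a set of active elements and
bag interpretations of the predicates. -/
structure PreInterp : Type where
  active : Set CanElem
  c : AtomicConcept → CanElem → ℕ∞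
  r : AtomicRole → CanElem → CanElem → ℕ∞

def PreInterp.toInterp (P : PreInterp) : BagInterp where
  Δ := CanElem
  dne := ⟨CanElem.ind 0⟩
  indMap := CanElem.ind
  indInj := fun a b h => by cases h; rfl
  cI := P.c
  rI := P.r

/-- Concept closure: `ccl(u,I,T)(C)` is the supremum of `C₀^I(u)` over all
concepts `C₀` with `T ⊨ C₀ ⊑ C`. -/
def cclI (T : TBox) (I : BagInterp) (C : DLConcept) (u : I.Δ) : ℕ∞ :=
  ⨆ C₀ : {C₀ : DLConcept // TBox.EntailsCI T C₀ C}, I.conceptMult C₀.1 u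

def PreInterp.ccl (P : PreInterp) (T : TBox) (u : CanElem) (C : DLConcept) : ℕ∞ :=
  cclI T P.toInterp C u

/-- `δ = ccl(u,C_{i-1},T)(∃R) − (∃R)^{C_{i-1}}(u)` (truncated subtraction). -/
def PreInterp.delta (P : PreInterp) (T : TBox) (u : CanElem) (R : Role) : ℕ∞ :=
  P.ccl T u (DLConcept.ex R) - P.toInterp.conceptMult (DLConcept.ex R) u

/-- The anonymous elements freshly added when stepping from `P`. -/
def PreInterp.NewAnon (P : PreInterp) (T : TBox) (w : CanElem) : Prop :=
  ∃ u R j, w = CanElem.anon u R j ∧ u ∈ P.active ∧ (j : ℕ∞) < P.delta T u R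

/-- One step of the canonical-model construction. -/
def PreInterp.step (P : PreInterp) (T : TBox) : PreInterp where
  active := P.active ∪ {w | P.NewAnon T w}
  c := fun A u => if u ∈ P.active then P.ccl T u (DLConcept.atomic A) else 0
  r := fun P₀ u v =>
    if u ∈ P.active ∧ v ∈ P.active then P.r P₀ u v
    else if ∃ j, v = CanElem.anon u (Role.atomic P₀) j ∧ P.NewAnon T v then 1
    else if ∃ j, u = CanElem.anon v (Role.inv P₀) j ∧ P.NewAnon T u then 1
    else 0

/-- The stages `C_i(K)` of the canonical bag model. -/
def canStage (K : Ontology) : ℕ → PreInterp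
  | 0 =>
    { active := Set.range CanElem.ind
      c := fun A u =>
        match u with
        | CanElem.ind a => BagABox.mult K.abox (Assertion.conceptA A a)
        | _ => 0
      r := fun P u v =>
        match u, v with
        | CanElem.ind a, CanElem.ind b => BagABox.mult K.abox (Assertion.roleA P a b)
        | _, _ => 0 }
  | (i + 1) => (canStage K i).step K.tbox

/-- The canonical bag model `C(K) = ⋃_{i ≥ 0} C_i(K)` (pointwise maximum). -/
def canInterp (K : Ontology) : BagInterp where
  Δ := CanElem
  dne := ⟨CanElem.ind 0⟩
  indMap := CanElem.ind
  indInj := fun a b h => by cases h; rfl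
  cI := fun A u => ⨆ i, (canStage K i).c A u
  rI := fun P u v => ⨆ i, (canStage K i).r P u v

/-- The canonical bag model `C(⟨∅,A⟩)` of the ontology with empty TBox:
individuals as domain, every predicate interpreted by its ABox bag. -/
def emptyCanInterp (A : BagABox) : BagInterp where
  Δ := Ind
  dne := ⟨0⟩
  indMap := id
  indInj := fun _ _ h => h
  cI := fun C a => BagABox.mult A (Assertion.conceptA C a)
  rI := fun P a b => BagABox.mult A (Assertion.roleA P a b)

/-- `[q,z]^{C(K)}`: bag answers over the canonical model computed only over
valuations sending the variables of `z` to anonymous elements and the remaining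
existential variables to individuals. -/
def CQ.restrictedAnswer (q : CQ) (K : Ontology) (z : Finset Var) (a : List Ind) : ℕ∞ :=
  bagSum (fun f : {f : Var → CanElem //
      (∀ v, v ∉ q.vars → f v = CanElem.ind 0) ∧
      q.answerVars.map f = a.map CanElem.ind ∧
      ∀ v ∈ q.existVars, (v ∈ z → CanElem.isAnon (f v)) ∧ (v ∉ z → ∃ b : Ind, f v = CanElem.ind b)} =>
    (q.atoms.map (QAtom.mult (canInterp K) f.1)).prod)

/- ## Ma-connected subsets, realisability, and the per-`z` rewritten query -/

/-- `t` is a variable belonging to `z`. -/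
def Term.IsZVar (t : Term) (z : Finset Var) : Prop := ∃ v ∈ z, t = Term.var v

/-- Adjacency in the Gaifman graph restricted to nodes that are variables of `z`. -/
def CQ.zAdj (q : CQ) (z : Finset Var) : Term → Term → Prop := fun t₁ t₂ =>
  q.gaifmanAdj t₁ t₂ ∧ t₁.IsZVar z ∧ t₂.IsZVar z

/-- `z'` is maximally connected in the anonymous part (ma-connected) within `z`. -/
def CQ.MAConnected (q : CQ) (z z' : Finset Var) : Prop :=
  z' ⊆ z ∧
  (∀ v ∈ z', ∀ w ∈ z, Relation.ReflTransGen (q.zAdj z) (Term.var v) (Term.var w) → w ∈ z') ∧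
  (∀ v ∈ z', ∀ w ∈ z', Relation.ReflTransGen (q.zAdj z) (Term.var v) (Term.var w))

/-- `φ_{z'}`: the subconjunction of all atoms of `q` mentioning a variable of `z'`. -/
def CQ.subAtoms (q : CQ) (z' : Finset Var) : List QAtom :=
  q.atoms.filter (fun atm => decide (∃ v ∈ z', v ∈ QAtom.vars atm))

def termsOfList (l : List QAtom) : List Term :=
  l.foldr (fun atm acc => QAtom.terms atm ++ acc) []

/-- `t_{z'}`: all terms occurring in `φ_{z'}` that are not variables of `z`. -/
def CQ.tTerms (q : CQ) (z z' : Finset Var) : List Term :=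
  (termsOfList (q.subAtoms z')).filter (fun t => decide (¬ t.IsZVar z))

/-- `atm` is a legitimate choice of `α_{z'}`: an atom of `φ_{z'}` of the form
`P(t,z)` or `P(z,t)` with `z ∈ z'` and the term `t` not a variable of `z`. -/
def IsAlphaFor (q : CQ) (z z' : Finset Var) (atm : QAtom) : Prop :=
  atm ∈ q.subAtoms z' ∧
  ((∃ P t v, v ∈ z' ∧ ¬ Term.IsZVar t z ∧ atm = QAtom.roleAt P t (Term.var v)) ∨
   (∃ P t v, v ∈ z' ∧ ¬ Term.IsZVar t z ∧ atm = QAtom.roleAt P (Term.var v) t))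

def CQ.inds (q : CQ) : List Ind :=
  (termsOfList q.atoms).foldr (fun t acc => t.indsOf ++ acc) []

def CQ.maxInd (q : CQ) : Ind := q.inds.foldr max 0

/-- The individual `a` of `q^a_{z'}`: the individual among `t_{z'}` if one
exists, and a fresh individual otherwise. -/
def freshA (q : CQ) (z z' : Finset Var) : Ind :=
  if h : ∃ c : Ind, Term.ind c ∈ q.tTerms z z' then h.choose else q.maxInd + 1

/-- A fresh individual `b` (distinct from `freshA`). -/
def freshB (q : CQ) : Ind := q.maxInd + 2

/-- The one-assertion bag ABox `A'` used to test realisability: `{P(a,b)}` if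
`α_{z'} = P(t,z)` and `{P(b,a)}` if `α_{z'} = P(z,t)`. -/
def alphaABox (z' : Finset Var) (atm : QAtom) (a b : Ind) : BagABox :=
  match atm with
  | QAtom.roleAt P _ t₂ =>
      if Term.IsZVar t₂ z' then {Assertion.roleA P a b} else {Assertion.roleA P b a}
  | _ => 0

def subVars (q : CQ) (z' : Finset Var) : List Var :=
  (q.subAtoms z').foldr (fun atm acc => QAtom.vars atm ++ acc) []

/-- The bag answer `(q^a_{z'})^{C(⟨T,A'⟩)}(⟨⟩)` of the Boolean query
`q^a_{z'}() = ∃x'.∃z'. φ_{z'} ∧ ⋀_{t ∈ t_{z'}}(t = a) ∧ ⋀_{z ∈ z'}(z ≠ a)`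
over the canonical model of `⟨T,A'⟩`. -/
def realQAnswer (T : TBox) (q : CQ) (z z' : Finset Var) (atm : QAtom) : ℕ∞ :=
  bagSum (fun f : {f : Var → CanElem //
      (∀ v, v ∉ subVars q z' → f v = CanElem.ind 0) ∧
      (∀ t ∈ q.tTerms z z',
        termVal (canInterp ⟨T, alphaABox z' atm (freshA q z z') (freshB q)⟩) f t
          = CanElem.ind (freshA q z z')) ∧
      ∀ v ∈ z', f v ≠ CanElem.ind (freshA q z z')} =>
    ((q.subAtoms z').map
      (QAtom.mult (canInterp ⟨T, alphaABox z' atm (freshA q z z') (freshB q)⟩) f.1)).prod)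

/-- Equality-consistency of `z`: no equality atom `z = t` with `z ∈ z` and `t ∉ z`. -/
def EqConsistent (q : CQ) (z : Finset Var) : Prop :=
  ∀ v t, QAtom.eqAt v t ∈ q.atoms → v ∈ z → Term.IsZVar t z

/-- The ma-connected subset `z'` is realisable by `T` (w.r.t. the chosen `α_{z'}`). -/
def RealisableMA (T : TBox) (q : CQ) (z z' : Finset Var) (atm : QAtom) : Prop :=
  1 ≤ realQAnswer T q z z' atm

/-- `z` is realisable by `T`: equality-consistent and every nonempty
ma-connected subset of `z` is realisable. -/
def RealisableZ (T : TBox) (q : CQ) (z : Finset Var) (alpha : Finset Var → QAtom) : Prop :=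
  EqConsistent q z ∧
  ∀ z' : Finset Var, q.MAConnected z z' → z'.Nonempty → RealisableMA T q z z' (alpha z')

/-- The nonempty ma-connected subsets of `z`. -/
def maSets (q : CQ) (z : Finset Var) : Finset (Finset Var) :=
  z.powerset.filter (fun z' => q.MAConnected z z' ∧ z'.Nonempty)

def tTermVars (q : CQ) (z z' : Finset Var) : List Var :=
  (q.tTerms z z').foldr (fun t acc => Term.varsOf t ++ acc) []

/-- The equalities identifying all the terms of `t_{z'}`. -/
def eqAtomsFor (q : CQ) (z z' : Finset Var) : List QAtom :=
  (tTermVars q z z').foldr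
    (fun v acc => ((q.tTerms z z').map (fun t => QAtom.eqAt v t)) ++ acc) []

/-- Atoms of `q_z`: the atoms of `q` not mentioning a variable of `z`, plus,
for each nonempty ma-connected `z' ⊆ z`, the atom `α_{z'}` together with the
equalities identifying the terms of `t_{z'}`. -/
def qzAtoms (q : CQ) (z : Finset Var) (alpha : Finset Var → QAtom) : List QAtom :=
  q.atoms.filter (fun atm => decide (¬ ∃ v ∈ z, v ∈ QAtom.vars atm))
    ++ (maSets q z).toList.foldr (fun z' acc => alpha z' :: (eqAtomsFor q z z' ++ acc)) []

/-- The CQ `q_z(x) = ∃y'. φ_z(x,y')`. -/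
def qz (q : CQ) (z : Finset Var) (alpha : Finset Var → QAtom) : CQ where
  answerVars := q.answerVars
  existVars := q.existVars.filter (fun v => decide (∃ atm ∈ qzAtoms q z alpha, v ∈ QAtom.vars atm))
  atoms := qzAtoms q z alpha

/- ## The BALG rewriting `q̄` -/

/-- Value of an atom of `q_z` after the rewriting step 3 (`chasing back'' with
the TBox): concept atoms `A(t)` become `⋁_{T ⊨ C ⊑ A} ζ_C(t)`, role atoms with a
`z`-variable become the corresponding truncated difference, and the remaining
atoms are evaluated as before. -/
def rewAtomVal (T : TBox) (I : BagInterp) (z : Finset Var) (f : Var → I.Δ) : QAtom → ℕ∞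
  | QAtom.conceptAt A t => cclI T I (DLConcept.atomic A) (termVal I f t)
  | QAtom.roleAt P t₁ t₂ =>
      if Term.IsZVar t₂ z then
        cclI T I (DLConcept.ex (Role.atomic P)) (termVal I f t₁)
          - I.conceptMult (DLConcept.ex (Role.atomic P)) (termVal I f t₁)
      else if Term.IsZVar t₁ z then
        cclI T I (DLConcept.ex (Role.inv P)) (termVal I f t₂)
          - I.conceptMult (DLConcept.ex (Role.inv P)) (termVal I f t₂)
      else I.rI P (termVal I f t₁) (termVal I f t₂)
  | QAtom.eqAt v t => if f v = termVal I f t then 1 else 0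

/-- Bag answers of the BALG query `q̄_z`, obtained from `q_z` by projecting only
the variables of `y' ∖ z` and replacing atoms as in `rewAtomVal`. -/
def rewAnswer (T : TBox) (qq : CQ) (z : Finset Var) (I : BagInterp) (a : List Ind) : ℕ∞ :=
  bagSum (fun f : {f : Var → I.Δ //
      (∀ v, v ∉ qq.answerVars ++ qq.existVars.filter (fun u => decide (u ∉ z)) →
        f v = I.indMap 0) ∧
      qq.answerVars.map f = a.map I.indMap} =>
    (qq.atoms.map (rewAtomVal T I z f.1)).prod)

/- ## BALG¹_ε queries -/

def Term.fvars (t : Term) : Finset Var :=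
  match t with
  | Term.var v => {v}
  | Term.ind _ => ∅

/-- Syntax of BALG¹_ε queries. -/
inductive BQuery where
  | atomC : AtomicConcept → Term → BQuery
  | atomR : AtomicRole → Term → Term → BQuery
  | conj : BQuery → BQuery → BQuery
  | eqSel : BQuery → Var → Term → BQuery
  | proj : List Var → BQuery → BQuery
  | maxU : BQuery → BQuery → BQuery
  | arithU : BQuery → BQuery → BQuery
  | diff : BQuery → BQuery → BQuery

/-- Answer variables of a BALG¹_ε query. -/
def BQuery.fv : BQuery → Finset Var
  | BQuery.atomC _ t => t.fvars
  | BQuery.atomR _ t₁ t₂ => t₁.fvars ∪ t₂.fvars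
  | BQuery.conj q₁ q₂ => q₁.fv ∪ q₂.fv
  | BQuery.eqSel q _ t => q.fv ∪ t.fvars
  | BQuery.proj ys q => q.fv \ ys.toFinset
  | BQuery.maxU q₁ _ => q₁.fv
  | BQuery.arithU q₁ _ => q₁.fv
  | BQuery.diff q₁ _ => q₁.fv

/-- Well-formedness of BALG¹_ε queries. -/
def BQuery.WF : BQuery → Prop
  | BQuery.atomC _ _ => True
  | BQuery.atomR _ _ _ => True
  | BQuery.conj q₁ q₂ => q₁.WF ∧ q₂.WF
  | BQuery.eqSel q x _ => q.WF ∧ x ∈ q.fv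
  | BQuery.proj _ q => q.WF
  | BQuery.maxU q₁ q₂ => q₁.WF ∧ q₂.WF ∧ q₁.fv = q₂.fv
  | BQuery.arithU q₁ q₂ => q₁.WF ∧ q₂.WF ∧ q₁.fv = q₂.fv
  | BQuery.diff q₁ q₂ => q₁.WF ∧ q₂.WF ∧ q₁.fv = q₂.fv

/-- Semantics of BALG¹_ε queries under a valuation of the answer variables. -/
def BQuery.val (I : BagInterp) : BQuery → (Var → I.Δ) → ℕ∞
  | BQuery.atomC A t, f => I.cI A (termVal I f t)
  | BQuery.atomR P t₁ t₂, f => I.rI P (termVal I f t₁) (termVal I f t₂)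
  | BQuery.conj q₁ q₂, f => q₁.val I f * q₂.val I f
  | BQuery.eqSel q x t, f => if f x = termVal I f t then q.val I f else 0
  | BQuery.proj ys q, f => bagSum (fun g : {g : Var → I.Δ // ∀ v, v ∉ ys → g v = f v} => q.val I g.1)
  | BQuery.maxU q₁ q₂, f => max (q₁.val I f) (q₂.val I f)
  | BQuery.arithU q₁ q₂, f => q₁.val I f + q₂.val I f
  | BQuery.diff q₁ q₂, f => q₁.val I f - q₂.val I f

/-- Bag answers of a BALG¹_ε query with answer variables `xs` on a tuple `a`. -/
def BQuery.answer (Q : BQuery) (xs : List Var) (I : BagInterp) (a : List Ind) : ℕ∞ :=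
  if a.length = xs.length then Q.val I (fun v => I.indMap (a.getD (xs.idxOf v) 0)) else 0

/- ## Enumerated bags, e-homomorphisms, and e-valuations -/

/-- Enumerated copies of a bag of domain elements (for an atomic concept). -/
def EBagC (I : BagInterp) (A : AtomicConcept) : Type :=
  {p : I.Δ × ℕ // 1 ≤ p.2 ∧ (p.2 : ℕ∞) ≤ I.cI A p.1}

/-- Enumerated copies of a bag of pairs (for an atomic role). -/
def EBagR (I : BagInterp) (P : AtomicRole) : Type :=
  {p : (I.Δ × I.Δ) × ℕ // 1 ≤ p.2 ∧ (p.2 : ℕ∞) ≤ I.rI P p.1.1 p.1.2}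

/-- An e-homomorphism between the enumerated versions of two bag interpretations. -/
structure EHom (I J : BagInterp) where
  h : I.Δ → J.Δ
  hInd : ∀ a : Ind, h (I.indMap a) = J.indMap a
  hC : ∀ A : AtomicConcept, EBagC I A → EBagC J A
  hC_fst : ∀ (A : AtomicConcept) (x : EBagC I A), (hC A x).1.1 = h x.1.1
  hR : ∀ P : AtomicRole, EBagR I P → EBagR J P
  hR_fst : ∀ (P : AtomicRole) (x : EBagR I P), (hR P x).1.1 = (h x.1.1.1, h x.1.1.2)

/-- Predicate-injectivity on individuals of an e-homomorphism. -/
def EHom.PredInj {I J : BagInterp} (e : EHom I J) : Prop :=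
  ∀ u : I.Δ, (∃ a : Ind, e.h u = J.indMap a) →
    (∀ A : AtomicConcept, ∀ x y : EBagC I A,
      x.1.1 = u → y.1.1 = u → x.1.2 ≠ y.1.2 → e.hC A x ≠ e.hC A y) ∧
    (∀ P : AtomicRole, ∀ x y : EBagR I P, x.1.1.1 = u → y.1.1.1 = u →
      (x.1.1.2, x.1.2) ≠ (y.1.1.2, y.1.2) → e.hR P x ≠ e.hR P y) ∧
    (∀ P : AtomicRole, ∀ x y : EBagR I P, x.1.1.2 = u → y.1.1.2 = u →
      (x.1.1.1, x.1.2) ≠ (y.1.1.1, y.1.2) → e.hR P x ≠ e.hR P y)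

/-- Enumerated atoms of a CQ (seen as a bag of atoms). -/
def EAtom (q : CQ) : Type := {p : QAtom × ℕ // 1 ≤ p.2 ∧ p.2 ≤ q.atoms.count p.1}

/-- An e-valuation of the enumerated query `q^e` over the enumerated
interpretation `I^e`. -/
structure EVal (q : CQ) (I : BagInterp) where
  ν : Var → I.Δ
  hjunk : ∀ v, v ∉ q.vars → ν v = I.indMap 0
  heq : ∀ z t, QAtom.eqAt z t ∈ q.atoms → ν z = termVal I ν t
  ℓ : EAtom q → ℕ
  hone : ∀ e : EAtom q, 1 ≤ ℓ e
  hconcept : ∀ (e : EAtom q) (A : AtomicConcept) (t : Term),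
    e.1.1 = QAtom.conceptAt A t → (ℓ e : ℕ∞) ≤ I.cI A (termVal I ν t)
  hrole : ∀ (e : EAtom q) (P : AtomicRole) (t₁ t₂ : Term),
    e.1.1 = QAtom.roleAt P t₁ t₂ → (ℓ e : ℕ∞) ≤ I.rI P (termVal I ν t₁) (termVal I ν t₂)
  heqm : ∀ (e : EAtom q) (z : Var) (t : Term), e.1.1 = QAtom.eqAt z t → ℓ e = 1

/-- The tuple of domain elements to which an e-atom is sent by an e-valuation. -/
def EVal.imgTerms {q : CQ} {I : BagInterp} (ev : EVal q I) (e : EAtom q) : List I.Δ :=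
  (QAtom.terms e.1.1).map (termVal I ev.ν)

/-- The enumerated image of an e-atom under an e-valuation. -/
def EVal.img {q : CQ} {I : BagInterp} (ev : EVal q I) (e : EAtom q) : List I.Δ × ℕ :=
  (ev.imgTerms e, ev.ℓ e)

/- ## Auxiliary concrete queries -/

/-- The CQ `ζ_C(x)`: `A(x)`, `∃y.P(x,y)` or `∃y.P(y,x)`. -/
def zetaCQ : DLConcept → CQ
  | DLConcept.atomic A => ⟨[0], [], [QAtom.conceptAt A (Term.var 0)]⟩
  | DLConcept.ex (Role.atomic P) => ⟨[0], [1], [QAtom.roleAt P (Term.var 0) (Term.var 1)]⟩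
  | DLConcept.ex (Role.inv P) => ⟨[0], [1], [QAtom.roleAt P (Term.var 1) (Term.var 0)]⟩

/-- The CQ `q(x) = R(x,x)`. -/
def selfCQ (P : AtomicRole) : CQ := ⟨[0], [], [QAtom.roleAt P (Term.var 0) (Term.var 0)]⟩


/- ## Auxiliary lemmas for Statement 16 -/

section Aux16

lemma le_bagSum {α : Type*} (f : α → ℕ∞) (x : α) : f x ≤ bagSum f :=
  le_iSup_of_le ({x} : Finset α) (by simp)

lemma bagSum_le {α : Type*} {f : α → ℕ∞} {B : ℕ∞}
    (h : ∀ s : Finset α, ∑ x ∈ s, f x ≤ B) : bagSum f ≤ B := iSup_le h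

lemma enat_lt_one_eq_zero {a : ℕ∞} (h : a < 1) : a = 0 := by
  rcases (show (0:ℕ∞) ≤ a from zero_le).lt_or_eq with h1 | h1
  · exact absurd h (by exact not_lt.mpr (Order.one_le_iff_pos.mpr h1))
  · exact h1.symm

lemma sum_le_one_of_unique {α : Type*} {g : α → ℕ∞}
    (h1 : ∀ x, g x ≤ 1) (hU : ∀ x y, 0 < g x → 0 < g y → x = y) (s : Finset α) :
    ∑ x ∈ s, g x ≤ 1 := by
  by_cases h : ∃ x ∈ s, 0 < g x
  · obtain ⟨x, hx, hgx⟩ := h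
    rw [Finset.sum_eq_single_of_mem x hx]
    · exact h1 x
    · intro b hb hbx
      by_contra hgb
      exact hbx (hU b x (pos_iff_ne_zero.mpr hgb) hgx)
  · push_neg at h
    rw [Finset.sum_eq_zero (fun x hx => by simpa using h x hx)]
    exact zero_le

/-- The invariant maintained by the stages of the canonical model construction. -/
structure InvP (P : PreInterp) : Prop where
  hc0 : ∀ A u, u ∉ P.active → P.c A u = 0
  hr0 : ∀ P₀ u v, (u ∉ P.active ∨ v ∉ P.active) → P.r P₀ u v = 0
  hf : ∀ u R j, CanElem.anon u R j ∈ P.active → u ∈ P.active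
  hcA : ∀ A u R j, P.c A (CanElem.anon u R j) ≤ 1
  hrow1 : ∀ P₀ u R j v, P.r P₀ (CanElem.anon u R j) v ≤ 1
  hcol1 : ∀ P₀ u R j v, P.r P₀ v (CanElem.anon u R j) ≤ 1
  hrowU : ∀ P₀ u R j v₁ v₂, 0 < P.r P₀ (CanElem.anon u R j) v₁ →
    0 < P.r P₀ (CanElem.anon u R j) v₂ → v₁ = v₂
  hcolU : ∀ P₀ u R j v₁ v₂, 0 < P.r P₀ v₁ (CanElem.anon u R j) →
    0 < P.r P₀ v₂ (CanElem.anon u R j) → v₁ = v₂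

lemma conceptMult_ex_atomic (P : PreInterp) (P₀ : AtomicRole) (u : CanElem) :
    P.toInterp.conceptMult (DLConcept.ex (Role.atomic P₀)) u
      = bagSum (fun v => P.r P₀ u v) := rfl

lemma conceptMult_ex_inv (P : PreInterp) (P₀ : AtomicRole) (u : CanElem) :
    P.toInterp.conceptMult (DLConcept.ex (Role.inv P₀)) u
      = bagSum (fun v => P.r P₀ v u) := rfl

lemma InvP.cm_anon_le {P : PreInterp} (h : InvP P) (S : Role) (u : CanElem) (R : Role) (j : ℕ) :
    P.toInterp.conceptMult (DLConcept.ex S) (CanElem.anon u R j) ≤ 1 := by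
  cases S with
  | atomic P₀ =>
      rw [conceptMult_ex_atomic]
      exact bagSum_le (sum_le_one_of_unique (fun v => h.hrow1 P₀ u R j v)
        (fun x y hx hy => h.hrowU P₀ u R j x y hx hy))
  | inv P₀ =>
      rw [conceptMult_ex_inv]
      exact bagSum_le (sum_le_one_of_unique (fun v => h.hcol1 P₀ u R j v)
        (fun x y hx hy => h.hcolU P₀ u R j x y hx hy))

lemma InvP.ccl_anon_le {P : PreInterp} (h : InvP P) (T : TBox) (C : DLConcept)
    (u : CanElem) (R : Role) (j : ℕ) :
    P.ccl T (CanElem.anon u R j) C ≤ 1 := by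
  refine iSup_le fun C₀ => ?_
  obtain ⟨C₀, _⟩ := C₀
  cases C₀ with
  | atomic A => exact h.hcA A u R j
  | ex S => exact h.cm_anon_le S u R j

lemma InvP.delta_anon_le {P : PreInterp} (h : InvP P) (T : TBox) (S : Role)
    (u : CanElem) (R : Role) (j : ℕ) :
    P.delta T (CanElem.anon u R j) S ≤ 1 :=
  le_trans tsub_le_self (h.ccl_anon_le T _ u R j)

lemma InvP.row_zero {P : PreInterp} (h : InvP P) {T : TBox} {u : CanElem} {R : Role} {j : ℕ}
    {P₀ : AtomicRole} (hpos : 0 < P.delta T (CanElem.anon u R j) (Role.atomic P₀))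
    (v : CanElem) : P.r P₀ (CanElem.anon u R j) v = 0 := by
  have hlt := tsub_pos_iff_lt.mp hpos
  have h1 : P.toInterp.conceptMult (DLConcept.ex (Role.atomic P₀)) (CanElem.anon u R j) < 1 :=
    lt_of_lt_of_le hlt (h.ccl_anon_le T _ u R j)
  have h0 := enat_lt_one_eq_zero h1
  rw [conceptMult_ex_atomic] at h0
  exact le_antisymm (le_trans (le_bagSum _ v) (le_of_eq h0)) (zero_le)

lemma InvP.col_zero {P : PreInterp} (h : InvP P) {T : TBox} {u : CanElem} {R : Role} {j : ℕ}
    {P₀ : AtomicRole} (hpos : 0 < P.delta T (CanElem.anon u R j) (Role.inv P₀))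
    (v : CanElem) : P.r P₀ v (CanElem.anon u R j) = 0 := by
  have hlt := tsub_pos_iff_lt.mp hpos
  have h1 : P.toInterp.conceptMult (DLConcept.ex (Role.inv P₀)) (CanElem.anon u R j) < 1 :=
    lt_of_lt_of_le hlt (h.ccl_anon_le T _ u R j)
  have h0 := enat_lt_one_eq_zero h1
  rw [conceptMult_ex_inv] at h0
  exact le_antisymm (le_trans (le_bagSum _ v) (le_of_eq h0)) (zero_le)

lemma newAnon_anon_iff (P : PreInterp) (T : TBox) (u : CanElem) (R : Role) (j : ℕ) :
    P.NewAnon T (CanElem.anon u R j) ↔ (u ∈ P.active ∧ (j : ℕ∞) < P.delta T u R) := by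
  constructor
  · rintro ⟨u', R', j', he, hu', hj'⟩
    injection he with h1 h2 h3
    subst h1; subst h2; subst h3
    exact ⟨hu', hj'⟩
  · rintro ⟨h1, h2⟩
    exact ⟨u, R, j, rfl, h1, h2⟩

lemma step_active (P : PreInterp) (T : TBox) :
    (P.step T).active = P.active ∪ {w | P.NewAnon T w} := rfl

lemma step_r_pos {P : PreInterp} {T : TBox} {P₀ : AtomicRole} {u v : CanElem}
    (hpos : 0 < (P.step T).r P₀ u v) :
    (u ∈ P.active ∧ v ∈ P.active ∧ 0 < P.r P₀ u v) ∨
    ((¬ (u ∈ P.active ∧ v ∈ P.active)) ∧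
      ∃ j : ℕ, v = CanElem.anon u (Role.atomic P₀) j ∧ u ∈ P.active ∧
        (j : ℕ∞) < P.delta T u (Role.atomic P₀)) ∨
    ((¬ (u ∈ P.active ∧ v ∈ P.active)) ∧
      ∃ j : ℕ, u = CanElem.anon v (Role.inv P₀) j ∧ v ∈ P.active ∧
        (j : ℕ∞) < P.delta T v (Role.inv P₀)) := by
  have hstep : (P.step T).r P₀ u v =
      (if u ∈ P.active ∧ v ∈ P.active then P.r P₀ u v
       else if ∃ j, v = CanElem.anon u (Role.atomic P₀) j ∧ P.NewAnon T v then 1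
       else if ∃ j, u = CanElem.anon v (Role.inv P₀) j ∧ P.NewAnon T u then 1
       else 0) := rfl
  rw [hstep] at hpos
  split_ifs at hpos with h1 h2 h3
  · exact Or.inl ⟨h1.1, h1.2, hpos⟩
  · obtain ⟨j, hj, hn⟩ := h2
    rw [hj] at hn
    obtain ⟨ha, hd⟩ := (newAnon_anon_iff P T u (Role.atomic P₀) j).mp hn
    exact Or.inr (Or.inl ⟨h1, j, hj, ha, hd⟩)
  · obtain ⟨j, hj, hn⟩ := h3
    rw [hj] at hn
    obtain ⟨ha, hd⟩ := (newAnon_anon_iff P T v (Role.inv P₀) j).mp hn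
    exact Or.inr (Or.inr ⟨h1, j, hj, ha, hd⟩)
  · exact absurd hpos (lt_irrefl 0)

lemma cast_lt_one_zero {j : ℕ} (h : (j : ℕ∞) < 1) : j = 0 := by
  have : j < 1 := by exact_mod_cast h
  omega

lemma InvP.step {P : PreInterp} (h : InvP P) (T : TBox) : InvP (P.step T) := by
  constructor
  · -- hc0
    intro A u hu
    have hu' : u ∉ P.active := fun hm => hu (Set.mem_union_left _ hm)
    show (if u ∈ P.active then P.ccl T u (DLConcept.atomic A) else 0) = 0
    rw [if_neg hu']
  · -- hr0
    intro P₀ u v hor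
    by_contra hne
    have hpos : 0 < (P.step T).r P₀ u v := pos_iff_ne_zero.mpr hne
    rcases step_r_pos hpos with ⟨hu, hv, _⟩ | ⟨_, j, hj, hu, hd⟩ | ⟨_, j, hj, hv, hd⟩
    · rcases hor with hor | hor
      · exact hor (Set.mem_union_left _ hu)
      · exact hor (Set.mem_union_left _ hv)
    · rcases hor with hor | hor
      · exact hor (Set.mem_union_left _ hu)
      · exact hor (Set.mem_union_right _ (by
          rw [hj]; exact (newAnon_anon_iff P T u (Role.atomic P₀) j).mpr ⟨hu, hd⟩))
    · rcases hor with hor | hor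
      · exact hor (Set.mem_union_right _ (by
          rw [hj]; exact (newAnon_anon_iff P T v (Role.inv P₀) j).mpr ⟨hv, hd⟩))
      · exact hor (Set.mem_union_left _ hv)
  · -- hf
    intro u R j hm
    rcases hm with hm | hm
    · exact Set.mem_union_left _ (h.hf u R j hm)
    · obtain ⟨hu, _⟩ := (newAnon_anon_iff P T u R j).mp hm
      exact Set.mem_union_left _ hu
  · -- hcA
    intro A u R j
    show (if CanElem.anon u R j ∈ P.active
        then P.ccl T (CanElem.anon u R j) (DLConcept.atomic A) else 0) ≤ 1
    split_ifs with hm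
    · exact h.ccl_anon_le T _ u R j
    · exact zero_le
  · -- hrow1
    intro P₀ u R j v
    show (if CanElem.anon u R j ∈ P.active ∧ v ∈ P.active then P.r P₀ (CanElem.anon u R j) v
       else if ∃ j', v = CanElem.anon (CanElem.anon u R j) (Role.atomic P₀) j' ∧ P.NewAnon T v then 1
       else if ∃ j', CanElem.anon u R j = CanElem.anon v (Role.inv P₀) j' ∧
          P.NewAnon T (CanElem.anon u R j) then 1
       else 0) ≤ 1
    split_ifs with h1 h2 h3
    · exact h.hrow1 P₀ u R j v
    · exact le_refl 1
    · exact le_refl 1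
    · exact zero_le
  · -- hcol1
    intro P₀ u R j v
    show (if v ∈ P.active ∧ CanElem.anon u R j ∈ P.active then P.r P₀ v (CanElem.anon u R j)
       else if ∃ j', CanElem.anon u R j = CanElem.anon v (Role.atomic P₀) j' ∧
          P.NewAnon T (CanElem.anon u R j) then 1
       else if ∃ j', v = CanElem.anon (CanElem.anon u R j) (Role.inv P₀) j' ∧ P.NewAnon T v then 1
       else 0) ≤ 1
    split_ifs with h1 h2 h3
    · exact h.hcol1 P₀ u R j v
    · exact le_refl 1
    · exact le_refl 1
    · exact zero_le
  · -- hrowU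
    intro P₀ u R j v₁ v₂ hp1 hp2
    rcases step_r_pos hp1 with ⟨hw1, hv1, hq1⟩ | ⟨hn1, j₁, he1, hu1, hd1⟩ | ⟨hn1, j₁, he1, hu1, hd1⟩ <;>
      rcases step_r_pos hp2 with ⟨hw2, hv2, hq2⟩ | ⟨hn2, j₂, he2, hu2, hd2⟩ | ⟨hn2, j₂, he2, hu2, hd2⟩
    · exact h.hrowU P₀ u R j v₁ v₂ hq1 hq2
    · exact absurd hq1 (by rw [h.row_zero (lt_of_le_of_lt (zero_le) hd2) v₁]; exact lt_irrefl 0)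
    · injection he2 with e1 e2 e3
      exact absurd ⟨hw1, e1 ▸ hu2⟩ hn2
    · exact absurd hq2 (by rw [h.row_zero (lt_of_le_of_lt (zero_le) hd1) v₂]; exact lt_irrefl 0)
    · have hj1 : j₁ = 0 := cast_lt_one_zero (lt_of_lt_of_le hd1 (h.delta_anon_le T _ u R j))
      have hj2 : j₂ = 0 := cast_lt_one_zero (lt_of_lt_of_le hd2 (h.delta_anon_le T _ u R j))
      rw [he1, he2, hj1, hj2]
    · injection he2 with e1 e2 e3
      exact absurd ⟨hu1, e1 ▸ hu2⟩ hn2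
    · injection he1 with e1 e2 e3
      exact absurd ⟨hw2, e1 ▸ hu1⟩ hn1
    · injection he1 with e1 e2 e3
      exact absurd ⟨hu2, e1 ▸ hu1⟩ hn1
    · injection he1 with e11 e12 e13
      injection he2 with e21 e22 e23
      rw [← e11, ← e21]
  · -- hcolU
    intro P₀ u R j v₁ v₂ hp1 hp2
    rcases step_r_pos hp1 with ⟨hv1, hw1, hq1⟩ | ⟨hn1, j₁, he1, hu1, hd1⟩ | ⟨hn1, j₁, he1, hu1, hd1⟩ <;>
      rcases step_r_pos hp2 with ⟨hv2, hw2, hq2⟩ | ⟨hn2, j₂, he2, hu2, hd2⟩ | ⟨hn2, j₂, he2, hu2, hd2⟩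
    · exact h.hcolU P₀ u R j v₁ v₂ hq1 hq2
    · exact absurd ⟨hu2, hw1⟩ hn2
    · exact absurd hq1 (by rw [h.col_zero (lt_of_le_of_lt (zero_le) hd2) v₁]; exact lt_irrefl 0)
    · exact absurd ⟨hu1, hw2⟩ hn1
    · injection he1 with e11 e12 e13
      injection he2 with e21 e22 e23
      rw [← e11, ← e21]
    · exact absurd ⟨hu1, hu2⟩ hn1
    · exact absurd hq2 (by rw [h.col_zero (lt_of_le_of_lt (zero_le) hd1) v₂]; exact lt_irrefl 0)
    · exact absurd ⟨hu2, hu1⟩ hn2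
    · have hj1 : j₁ = 0 := cast_lt_one_zero (lt_of_lt_of_le hd1 (h.delta_anon_le T _ u R j))
      have hj2 : j₂ = 0 := cast_lt_one_zero (lt_of_lt_of_le hd2 (h.delta_anon_le T _ u R j))
      rw [he1, he2, hj1, hj2]

lemma invP_canStage (K : Ontology) : ∀ i, InvP (canStage K i) := by
  intro i
  induction i with
  | zero =>
      constructor
      · intro A u hu
        cases u with
        | ind a => exact absurd ⟨a, rfl⟩ hu
        | anon w R j => rfl
      · intro P₀ u v hor
        cases u with
        | ind a =>
            cases v with
            | ind b =>
                exfalso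
                rcases hor with hor | hor
                · exact hor ⟨a, rfl⟩
                · exact hor ⟨b, rfl⟩
            | anon w R j => rfl
        | anon w R j => cases v <;> rfl
      · intro u R j hm
        obtain ⟨y, hy⟩ := hm
        cases hy
      · intro A u R j
        exact zero_le
      · intro P₀ u R j v
        cases v <;> exact zero_le
      · intro P₀ u R j v
        cases v <;> exact zero_le
      · intro P₀ u R j v₁ v₂ hp1 hp2
        exfalso
        cases v₁ <;> exact absurd hp1 (lt_irrefl 0)
      · intro P₀ u R j v₁ v₂ hp1 hp2
        exfalso
        cases v₁ <;> exact absurd hp1 (lt_irrefl 0)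
  | succ n ih => exact ih.step K.tbox

lemma step_r_le {P : PreInterp} (h : InvP P) (T : TBox) (P₀ : AtomicRole) (u v : CanElem) :
    P.r P₀ u v ≤ (P.step T).r P₀ u v := by
  show P.r P₀ u v ≤
      (if u ∈ P.active ∧ v ∈ P.active then P.r P₀ u v
       else if ∃ j, v = CanElem.anon u (Role.atomic P₀) j ∧ P.NewAnon T v then 1
       else if ∃ j, u = CanElem.anon v (Role.inv P₀) j ∧ P.NewAnon T u then 1
       else 0)
  split_ifs with h1 h2 h3
  · exact le_refl _
  all_goals rw [h.hr0 P₀ u v (not_and_or.mp h1)]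
  all_goals exact zero_le

lemma canStage_r_mono (K : Ontology) (P₀ : AtomicRole) (u v : CanElem) :
    Monotone (fun i => (canStage K i).r P₀ u v) :=
  monotone_nat_of_le_succ fun i => step_r_le (invP_canStage K i) K.tbox P₀ u v

lemma canInterp_rI_def (K : Ontology) (P₀ : AtomicRole) (u v : CanElem) :
    (canInterp K).rI P₀ u v = ⨆ i, (canStage K i).r P₀ u v := rfl

lemma canInterp_cI_anon_le (K : Ontology) (A : AtomicConcept) (u : CanElem) (R : Role) (j : ℕ) :
    (canInterp K).cI A (CanElem.anon u R j) ≤ 1 :=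
  iSup_le fun i => (invP_canStage K i).hcA A u R j

lemma canInterp_rI_col_le (K : Ontology) (P₀ : AtomicRole) (v : CanElem)
    (u : CanElem) (R : Role) (j : ℕ) :
    (canInterp K).rI P₀ v (CanElem.anon u R j) ≤ 1 :=
  iSup_le fun i => (invP_canStage K i).hcol1 P₀ u R j v

lemma canInterp_colU (K : Ontology) (P₀ : AtomicRole) (v₁ v₂ u : CanElem) (R : Role) (j : ℕ)
    (h1 : 0 < (canInterp K).rI P₀ v₁ (CanElem.anon u R j))
    (h2 : 0 < (canInterp K).rI P₀ v₂ (CanElem.anon u R j)) : v₁ = v₂ := by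
  rw [canInterp_rI_def] at h1 h2
  obtain ⟨i₁, hi₁⟩ := lt_iSup_iff.mp h1
  obtain ⟨i₂, hi₂⟩ := lt_iSup_iff.mp h2
  exact (invP_canStage K (max i₁ i₂)).hcolU P₀ u R j v₁ v₂
    (lt_of_lt_of_le hi₁ (canStage_r_mono K P₀ v₁ _ (le_max_left i₁ i₂)))
    (lt_of_lt_of_le hi₂ (canStage_r_mono K P₀ v₂ _ (le_max_right i₁ i₂)))

lemma canInterp_rowU (K : Ontology) (P₀ : AtomicRole) (v₁ v₂ u : CanElem) (R : Role) (j : ℕ)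
    (h1 : 0 < (canInterp K).rI P₀ (CanElem.anon u R j) v₁)
    (h2 : 0 < (canInterp K).rI P₀ (CanElem.anon u R j) v₂) : v₁ = v₂ := by
  rw [canInterp_rI_def] at h1 h2
  obtain ⟨i₁, hi₁⟩ := lt_iSup_iff.mp h1
  obtain ⟨i₂, hi₂⟩ := lt_iSup_iff.mp h2
  exact (invP_canStage K (max i₁ i₂)).hrowU P₀ u R j v₁ v₂
    (lt_of_lt_of_le hi₁ (canStage_r_mono K P₀ _ v₁ (le_max_left i₁ i₂)))
    (lt_of_lt_of_le hi₂ (canStage_r_mono K P₀ _ v₂ (le_max_right i₁ i₂)))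

lemma termVal_eqRel {q : CQ} {I : BagInterp} (ev : EVal q I) {t₁ t₂ : Term}
    (h : q.eqRel t₁ t₂) : termVal I ev.ν t₁ = termVal I ev.ν t₂ := by
  induction h with
  | rel a b hab =>
      obtain ⟨z, t, hmem, h1, h2⟩ := hab
      rw [h1, h2]
      exact ev.heq z t hmem
  | refl => rfl
  | symm _ _ _ ih => exact ih.symm
  | trans _ _ _ _ _ ih1 ih2 => exact ih1.trans ih2

end Aux16

/-- Let `q` be a rooted Boolean CQ and `K` a DL-Lite_core^bag
ontology.  If two e-valuations of `q^e` over `C(K)^e` are different, then there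
exist an individual `a`, a (non-equality) e-atom `[S(t):m]` of `q^e` and
`i ∈ {1,2}` such that `ν^i(a)` occurs among the components of `ν^i(t)` and the
two e-valuations send `[S(t):m]` to different enumerated tuples. -/
theorem statement_16 (K : Ontology) (hcore : TBox.IsCore K.tbox)
    (q : CQ) (hwf : q.WellFormed) (hr : q.Rooted) (hbool : q.answerVars = [])
    (ev1 ev2 : EVal q (canInterp K))
    (hdiff : ev1.ν ≠ ev2.ν ∨ ev1.ℓ ≠ ev2.ℓ) :
    ∃ (a : Ind) (e : EAtom q) (i : Fin 2),
      (∀ z t, e.1.1 ≠ QAtom.eqAt z t) ∧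
      (canInterp K).indMap a ∈ EVal.imgTerms (if i = 0 then ev1 else ev2) e ∧
      ev1.img e ≠ ev2.img e := by
  by_contra hcon
  push_neg at hcon
  -- From the negation: any differing non-equality e-atom has no individual in its images.
  have haux : ∀ (e : EAtom q), (∀ z t, e.1.1 ≠ QAtom.eqAt z t) → ev1.img e ≠ ev2.img e →
      ∀ x : CanElem, (x ∈ ev1.imgTerms e ∨ x ∈ ev2.imgTerms e) →
        ∃ u R j, x = CanElem.anon u R j := by
    intro e h1 h2 x hx
    cases x with
    | ind a =>
        exfalso
        rcases hx with hx | hx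
        · exact h2 (hcon a e 0 h1 (by exact hx))
        · exact h2 (hcon a e 1 h1 (by exact hx))
    | anon u R j => exact ⟨u, R, j, rfl⟩
  -- Step 1: the multiplicity labellings agree.
  have hleq : ev1.ℓ = ev2.ℓ := by
    funext e
    by_contra hle
    have himg : ev1.img e ≠ ev2.img e := fun hh => hle (congrArg Prod.snd hh)
    rcases hA : e.1.1 with ⟨A, t⟩ | ⟨P₀, t₁, t₂⟩ | ⟨z, t⟩
    · -- concept atom
      have hne : ∀ z t0, e.1.1 ≠ QAtom.eqAt z t0 := by
        rw [hA]; intro z t0 hh; cases hh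
      have hm1 : termVal (canInterp K) ev1.ν t ∈ ev1.imgTerms e := by
        rw [EVal.imgTerms, hA]; simp [QAtom.terms]
      have hm2 : termVal (canInterp K) ev2.ν t ∈ ev2.imgTerms e := by
        rw [EVal.imgTerms, hA]; simp [QAtom.terms]
      obtain ⟨u1, R1, j1, hu1⟩ := haux e hne himg _ (Or.inl hm1)
      obtain ⟨u2, R2, j2, hu2⟩ := haux e hne himg _ (Or.inr hm2)
      have hb1 : (ev1.ℓ e : ℕ∞) ≤ 1 := by
        have hc := ev1.hconcept e A t hA
        rw [hu1] at hc
        exact hc.trans (canInterp_cI_anon_le K A u1 R1 j1)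
      have hb2 : (ev2.ℓ e : ℕ∞) ≤ 1 := by
        have hc := ev2.hconcept e A t hA
        rw [hu2] at hc
        exact hc.trans (canInterp_cI_anon_le K A u2 R2 j2)
      have e1 : ev1.ℓ e = 1 := le_antisymm (by exact_mod_cast hb1) (ev1.hone e)
      have e2 : ev2.ℓ e = 1 := le_antisymm (by exact_mod_cast hb2) (ev2.hone e)
      exact hle (e1.trans e2.symm)
    · -- role atom
      have hne : ∀ z t0, e.1.1 ≠ QAtom.eqAt z t0 := by
        rw [hA]; intro z t0 hh; cases hh
      have hm1 : termVal (canInterp K) ev1.ν t₂ ∈ ev1.imgTerms e := by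
        rw [EVal.imgTerms, hA]; simp [QAtom.terms]
      have hm2 : termVal (canInterp K) ev2.ν t₂ ∈ ev2.imgTerms e := by
        rw [EVal.imgTerms, hA]; simp [QAtom.terms]
      obtain ⟨u1, R1, j1, hu1⟩ := haux e hne himg _ (Or.inl hm1)
      obtain ⟨u2, R2, j2, hu2⟩ := haux e hne himg _ (Or.inr hm2)
      have hb1 : (ev1.ℓ e : ℕ∞) ≤ 1 := by
        have hc := ev1.hrole e P₀ t₁ t₂ hA
        rw [hu1] at hc
        exact hc.trans (canInterp_rI_col_le K P₀ _ u1 R1 j1)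
      have hb2 : (ev2.ℓ e : ℕ∞) ≤ 1 := by
        have hc := ev2.hrole e P₀ t₁ t₂ hA
        rw [hu2] at hc
        exact hc.trans (canInterp_rI_col_le K P₀ _ u2 R2 j2)
      have e1 : ev1.ℓ e = 1 := le_antisymm (by exact_mod_cast hb1) (ev1.hone e)
      have e2 : ev2.ℓ e = 1 := le_antisymm (by exact_mod_cast hb2) (ev2.hone e)
      exact hle (e1.trans e2.symm)
    · -- equality atom
      exact hle ((ev1.heqm e z t hA).trans (ev2.heqm e z t hA).symm)
  -- Step 2: the variable assignments agree.
  have hνeq : ev1.ν = ev2.ν := by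
    funext v
    by_contra hv
    have hvq : v ∈ q.vars := by
      by_contra hvq
      exact hv ((ev1.hjunk v hvq).trans (ev2.hjunk v hvq).symm)
    obtain ⟨t, atm, hatm, hne, htm, hrel⟩ := hwf.2.2.2.2 v hvq
    have hdt : termVal (canInterp K) ev1.ν t ≠ termVal (canInterp K) ev2.ν t := by
      intro he
      apply hv
      have e1 := termVal_eqRel ev1 hrel
      have e2 := termVal_eqRel ev2 hrel
      exact e1.trans (he.trans e2.symm)
    -- local propagation of differences along the Gaifman graph
    have hstep : ∀ s s', q.gaifmanAdj s s' →
        termVal (canInterp K) ev1.ν s ≠ termVal (canInterp K) ev2.ν s →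
        termVal (canInterp K) ev1.ν s' ≠ termVal (canInterp K) ev2.ν s' := by
      intro s s' hadj hds heqs'
      obtain ⟨α, hα, hsα, hs'α⟩ := hadj
      rcases α with ⟨A, t0⟩ | ⟨P₀, t₁, t₂⟩ | ⟨z, t0⟩
      · simp [QAtom.terms] at hsα hs'α
        rw [hsα] at hds
        rw [hs'α] at heqs'
        exact hds heqs'
      · simp [QAtom.terms] at hsα hs'α
        have hcnt : 1 ≤ q.atoms.count (QAtom.roleAt P₀ t₁ t₂) := List.count_pos_iff.mpr hα
        let e : EAtom q := ⟨(QAtom.roleAt P₀ t₁ t₂, 1), le_refl 1, hcnt⟩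
        have he11 : e.1.1 = QAtom.roleAt P₀ t₁ t₂ := rfl
        have hne' : ∀ z0 t3, e.1.1 ≠ QAtom.eqAt z0 t3 := by
          rw [he11]; intro z0 t3 hh; cases hh
        rcases hsα with hs1 | hs1 <;> rcases hs'α with hs2 | hs2
        · rw [hs1] at hds; rw [hs2] at heqs'; exact hds heqs'
        · -- s = t₁, s' = t₂
          rw [hs1] at hds; rw [hs2] at heqs'
          have himg : ev1.img e ≠ ev2.img e := by
            intro hh
            have h5 : ev1.imgTerms e = ev2.imgTerms e := congrArg Prod.fst hh
            rw [EVal.imgTerms, EVal.imgTerms, he11] at h5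
            simp [QAtom.terms] at h5
            exact hds h5.1
          have hmem2 : termVal (canInterp K) ev1.ν t₂ ∈ ev1.imgTerms e := by
            rw [EVal.imgTerms, he11]; simp [QAtom.terms]
          obtain ⟨u, R, j, hu⟩ := haux e hne' himg _ (Or.inl hmem2)
          have hpos1 : (0:ℕ∞) < (ev1.ℓ e : ℕ∞) := by
            have := ev1.hone e
            exact_mod_cast Nat.lt_of_lt_of_le Nat.zero_lt_one this
          have hpos2 : (0:ℕ∞) < (ev2.ℓ e : ℕ∞) := by
            have := ev2.hone e
            exact_mod_cast Nat.lt_of_lt_of_le Nat.zero_lt_one this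
          have p1 : 0 < (canInterp K).rI P₀ (termVal (canInterp K) ev1.ν t₁)
              (termVal (canInterp K) ev1.ν t₂) :=
            lt_of_lt_of_le hpos1 (ev1.hrole e P₀ t₁ t₂ he11)
          have p2 : 0 < (canInterp K).rI P₀ (termVal (canInterp K) ev2.ν t₁)
              (termVal (canInterp K) ev1.ν t₂) := by
            have h7 := ev2.hrole e P₀ t₁ t₂ he11
            rw [← heqs'] at h7
            exact lt_of_lt_of_le hpos2 h7
          rw [hu] at p1 p2
          exact hds (canInterp_colU K P₀ _ _ u R j p1 p2)
        · -- s = t₂, s' = t₁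
          rw [hs1] at hds; rw [hs2] at heqs'
          have himg : ev1.img e ≠ ev2.img e := by
            intro hh
            have h5 : ev1.imgTerms e = ev2.imgTerms e := congrArg Prod.fst hh
            rw [EVal.imgTerms, EVal.imgTerms, he11] at h5
            simp [QAtom.terms] at h5
            exact hds h5.2
          have hmem1 : termVal (canInterp K) ev1.ν t₁ ∈ ev1.imgTerms e := by
            rw [EVal.imgTerms, he11]; simp [QAtom.terms]
          obtain ⟨u, R, j, hu⟩ := haux e hne' himg _ (Or.inl hmem1)
          have hpos1 : (0:ℕ∞) < (ev1.ℓ e : ℕ∞) := by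
            have := ev1.hone e
            exact_mod_cast Nat.lt_of_lt_of_le Nat.zero_lt_one this
          have hpos2 : (0:ℕ∞) < (ev2.ℓ e : ℕ∞) := by
            have := ev2.hone e
            exact_mod_cast Nat.lt_of_lt_of_le Nat.zero_lt_one this
          have p1 : 0 < (canInterp K).rI P₀ (termVal (canInterp K) ev1.ν t₁)
              (termVal (canInterp K) ev1.ν t₂) :=
            lt_of_lt_of_le hpos1 (ev1.hrole e P₀ t₁ t₂ he11)
          have p2 : 0 < (canInterp K).rI P₀ (termVal (canInterp K) ev1.ν t₁)
              (termVal (canInterp K) ev2.ν t₂) := by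
            have h7 := ev2.hrole e P₀ t₁ t₂ he11
            rw [← heqs'] at h7
            exact lt_of_lt_of_le hpos2 h7
          rw [hu] at p1 p2
          exact hds (canInterp_rowU K P₀ _ _ u R j p1 p2)
        · rw [hs1] at hds; rw [hs2] at heqs'; exact hds heqs'
      · -- equality atom
        simp [QAtom.terms] at hsα hs'α
        have k1 : ev1.ν z = termVal (canInterp K) ev1.ν t0 := ev1.heq z t0 hα
        have k2 : ev2.ν z = termVal (canInterp K) ev2.ν t0 := ev2.heq z t0 hα
        have h1 : termVal (canInterp K) ev1.ν s = termVal (canInterp K) ev1.ν s' := by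
          rcases hsα with rfl | rfl <;> rcases hs'α with rfl | rfl
          · rfl
          · exact k1
          · exact k1.symm
          · rfl
        have h2 : termVal (canInterp K) ev2.ν s = termVal (canInterp K) ev2.ν s' := by
          rcases hsα with rfl | rfl <;> rcases hs'α with rfl | rfl
          · rfl
          · exact k2
          · exact k2.symm
          · rfl
        exact hds (h1.trans (heqs'.trans h2.symm))
    have hprop : ∀ s, Relation.ReflTransGen q.gaifmanAdj t s →
        termVal (canInterp K) ev1.ν s ≠ termVal (canInterp K) ev2.ν s := by
      intro s hs
      induction hs with
      | refl => exact hdt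
      | tail _ hbc ih => exact hstep _ _ hbc ih
    obtain ⟨t', hpath, hcase⟩ := hr t ⟨atm, hatm, htm⟩
    have hdt' := hprop t' hpath
    rcases hcase with ⟨v0, hv0, rfl⟩ | ⟨a, rfl⟩
    · rw [hbool] at hv0
      exact absurd hv0 List.not_mem_nil
    · exact hdt' rfl
  rcases hdiff with h | h
  · exact h hνeq
  · exact h hleq
end
end

section
/- Let K = ⟨T,A⟩ be a DL-Lite_core^bag ontology, C a concept, and a an individual. Then the bag answer at a of the CQ q_C(x) = ζ_C(x) over the canonical bag model C(K) equals the bag answer at a of the max-union query η_C(x) = ⋁_{T ⊨ C₀ ⊑ C} ζ_{C₀}(x) over the canonical bag model C(⟨∅,A⟩) of the ontology with empty TBox and bag ABox A. -/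
/-!
Common formalization of the bag semantics of DL-Lite ontologies
(Nikolaou et al., "The Bag Semantics of Ontology-Based Data Access").
-/

open scoped Classical

noncomputable section

/-! ### Auxiliary lemmas for Statement 17 -/

section St17Aux

lemma st17_le_bagSum {α : Type*} (f : α → ℕ∞) (s : Finset α) : ∑ x ∈ s, f x ≤ bagSum f :=
  le_iSup (fun s : Finset α => ∑ x ∈ s, f x) s

lemma st17_bagSum_mono {α : Type*} {f g : α → ℕ∞} (h : ∀ x, f x ≤ g x) : bagSum f ≤ bagSum g :=
  iSup_mono fun s => Finset.sum_le_sum fun x _ => h x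

lemma st17_bagSum_congr {α : Type*} {f g : α → ℕ∞} (h : ∀ x, f x = g x) : bagSum f = bagSum g := by
  have : f = g := funext h
  rw [this]

lemma st17_bagSum_comp_inj {α β : Type*} (g : α → β) (hg : Function.Injective g) (f : β → ℕ∞)
    (h0 : ∀ b, b ∉ Set.range g → f b = 0) : bagSum (fun x => f (g x)) = bagSum f := by
  refine le_antisymm (iSup_le fun s => ?_) (iSup_le fun t => ?_)
  · calc ∑ x ∈ s, f (g x) = ∑ y ∈ s.map ⟨g, hg⟩, f y := (Finset.sum_map s ⟨g, hg⟩ f).symm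
      _ ≤ bagSum f := st17_le_bagSum f _
  · calc ∑ y ∈ t, f y = ∑ x ∈ t.preimage g hg.injOn, f (g x) :=
        (Finset.sum_preimage g t hg.injOn f (fun x _ hx => h0 x hx)).symm
      _ ≤ _ := st17_le_bagSum _ _

lemma st17_bagSum_single {α : Type*} (f : α → ℕ∞) (x₀ : α) (h : ∀ x, x = x₀) :
    bagSum f = f x₀ := by
  refine le_antisymm (iSup_le fun s => ?_) (le_iSup_of_le {x₀} (by simp))
  have hs : s ⊆ {x₀} := fun x _ => by rw [h x]; simp
  calc ∑ x ∈ s, f x ≤ ∑ x ∈ ({x₀} : Finset α), f x :=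
        Finset.sum_le_sum_of_subset hs
    _ = f x₀ := Finset.sum_singleton _ _

lemma st17_bagSum_add {α : Type*} (f g : α → ℕ∞) :
    bagSum (fun x => f x + g x) = bagSum f + bagSum g := by
  unfold bagSum
  rw [ENat.iSup_add_iSup (f := fun s : Finset α => ∑ x ∈ s, f x)
      (g := fun s : Finset α => ∑ x ∈ s, g x)
      (fun s t => ⟨s ∪ t,
        add_le_add (Finset.sum_le_sum_of_subset Finset.subset_union_left)
          (Finset.sum_le_sum_of_subset Finset.subset_union_right)⟩)]
  exact iSup_congr fun s => by simp [Finset.sum_add_distrib]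

lemma st17_finsetSum_iSup {α : Type*} (s : Finset α) (g : ℕ → α → ℕ∞)
    (hm : ∀ x, Monotone fun i => g i x) :
    ∑ x ∈ s, ⨆ i, g i x = ⨆ i, ∑ x ∈ s, g i x := by
  classical
  induction s using Finset.induction with
  | empty => simp
  | @insert a s ha ih =>
      rw [Finset.sum_insert ha, ih,
        ENat.iSup_add_iSup_of_monotone (hm a)
          (fun i j hij => Finset.sum_le_sum fun x _ => hm x hij)]
      exact iSup_congr fun i => (Finset.sum_insert ha).symm

lemma st17_bagSum_iSup {α : Type*} (g : ℕ → α → ℕ∞) (hm : ∀ x, Monotone fun i => g i x) :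
    bagSum (fun x => ⨆ i, g i x) = ⨆ i, bagSum (g i) := by
  refine le_antisymm (iSup_le fun s => ?_)
    (iSup_le fun i => st17_bagSum_mono fun x => le_iSup (fun i => g i x) i)
  rw [st17_finsetSum_iSup s g hm]
  exact iSup_mono fun i => st17_le_bagSum _ _

lemma st17_bagSum_indicator (δ : ℕ∞) :
    bagSum (fun j : ℕ => if (j : ℕ∞) < δ then 1 else 0) = δ := by
  have key : ∀ s : Finset ℕ, ∑ j ∈ s, (if (j : ℕ∞) < δ then (1 : ℕ∞) else 0)
      = (((s.filter fun j : ℕ => (j : ℕ∞) < δ).card : ℕ) : ℕ∞) := by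
    intro s
    calc ∑ j ∈ s, (if (j : ℕ∞) < δ then (1 : ℕ∞) else 0)
        = ∑ _j ∈ s.filter (fun j : ℕ => (j : ℕ∞) < δ), (1 : ℕ∞) :=
          (Finset.sum_filter (fun j : ℕ => (j : ℕ∞) < δ) (fun _ => (1 : ℕ∞))).symm
      _ = _ := by rw [Finset.sum_const, nsmul_eq_mul, mul_one]
  induction δ using ENat.recTopCoe with
  | top =>
    refine le_antisymm le_top ?_
    have hn : ∀ n : ℕ, (n : ℕ∞) ≤ bagSum (fun j : ℕ => if (j : ℕ∞) < (⊤ : ℕ∞) then 1 else 0) := by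
      intro n
      refine le_trans ?_ (st17_le_bagSum _ (Finset.range n))
      rw [key]
      have h1 : (Finset.range n).filter (fun j : ℕ => (j : ℕ∞) < (⊤ : ℕ∞)) = Finset.range n :=
        Finset.filter_true_of_mem fun j _ => ENat.coe_lt_top j
      rw [h1, Finset.card_range]
    calc (⊤ : ℕ∞) = ⨆ n : ℕ, (n : ℕ∞) := ENat.iSup_natCast.symm
      _ ≤ _ := iSup_le hn
  | coe n =>
    refine le_antisymm (iSup_le fun s => ?_) ?_
    · rw [key]
      have hsub : s.filter (fun j : ℕ => (j : ℕ∞) < (n : ℕ∞)) ⊆ Finset.range n := by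
        intro j hj
        simp only [Finset.mem_filter] at hj
        exact Finset.mem_range.2 (by exact_mod_cast hj.2)
      have := le_trans (Finset.card_le_card hsub) (Finset.card_range n).le
      exact_mod_cast this
    · refine le_trans ?_ (st17_le_bagSum _ (Finset.range n))
      rw [key]
      have h1 : (Finset.range n).filter (fun j : ℕ => (j : ℕ∞) < (n : ℕ∞)) = Finset.range n :=
        Finset.filter_true_of_mem fun j hj => by
          exact_mod_cast Finset.mem_range.1 hj
      rw [h1, Finset.card_range]

/-! Entailment basics. -/

lemma st17_entails_refl (T : TBox) (C : DLConcept) : TBox.EntailsCI T C C :=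
  fun _ _ => subset_rfl

lemma st17_entails_trans {T : TBox} {C D E : DLConcept}
    (h1 : TBox.EntailsCI T C D) (h2 : TBox.EntailsCI T D E) : TBox.EntailsCI T C E :=
  fun I hI => (h1 I hI).trans (h2 I hI)

lemma st17_le_cclI (T : TBox) (I : BagInterp) (C : DLConcept) (u : I.Δ) :
    I.conceptMult C u ≤ cclI T I C u :=
  le_iSup (fun C₀ : {C₀ : DLConcept // TBox.EntailsCI T C₀ C} => I.conceptMult C₀.1 u)
    ⟨C, st17_entails_refl T C⟩

/-! Evaluation of `ζ_C(x)`. -/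

lemma st17_zeta_atomic (I : BagInterp) (A : AtomicConcept) (a : Ind) :
    (zetaCQ (DLConcept.atomic A)).bagAnswer I [a] = I.cI A (I.indMap a) := by
  set q := zetaCQ (DLConcept.atomic A) with hq
  have hf0 : (∀ v, v ∉ q.vars → (fun v => if v = 0 then I.indMap a else I.indMap 0) v = I.indMap 0)
      ∧ q.answerVars.map (fun v => if v = 0 then I.indMap a else I.indMap 0)
        = [a].map I.indMap := by
    constructor
    · intro v hv
      have hv' : v ≠ 0 := by simpa [hq, zetaCQ, CQ.vars] using hv
      simp [hv']
    · simp [hq, zetaCQ]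
  rw [CQ.bagAnswer, st17_bagSum_single _ ⟨_, hf0⟩ ?_]
  · simp [hq, zetaCQ, QAtom.mult, termVal]
  · rintro ⟨f, hjunk, hans⟩
    apply Subtype.ext
    funext v
    by_cases hv : v = 0
    · subst hv
      have : f 0 = I.indMap a := by simpa [hq, zetaCQ] using hans
      simp [this]
    · have : f v = I.indMap 0 := hjunk v (by simp [hq, zetaCQ, CQ.vars, hv])
      simp [hv, this]

lemma st17_zeta_ex_atomic (I : BagInterp) (P : AtomicRole) (a : Ind) :
    (zetaCQ (DLConcept.ex (Role.atomic P))).bagAnswer I [a]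
      = I.conceptMult (DLConcept.ex (Role.atomic P)) (I.indMap a) := by
  set q := zetaCQ (DLConcept.ex (Role.atomic P)) with hq
  let g : I.Δ → {f : Var → I.Δ //
      (∀ v, v ∉ q.vars → f v = I.indMap 0) ∧ q.answerVars.map f = [a].map I.indMap} :=
    fun v => ⟨fun w => if w = 0 then I.indMap a else if w = 1 then v else I.indMap 0, by
      constructor
      · intro w hw
        have hw' : w ≠ 0 ∧ w ≠ 1 := by simpa [hq, zetaCQ, CQ.vars] using hw
        simp [hw'.1, hw'.2]
      · simp [hq, zetaCQ]⟩
  have hinj : Function.Injective g := by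
    intro u v h
    have := congrFun (congrArg Subtype.val h) 1
    simpa [g] using this
  have hsurj : ∀ b, b ∈ Set.range g := by
    rintro ⟨f, hjunk, hans⟩
    refine ⟨f 1, Subtype.ext (funext fun w => ?_)⟩
    by_cases hw0 : w = 0
    · subst hw0
      have : f 0 = I.indMap a := by simpa [hq, zetaCQ] using hans
      simp [g, this]
    · by_cases hw1 : w = 1
      · subst hw1; simp [g, hw0]
      · have : f w = I.indMap 0 := hjunk w (by simp [hq, zetaCQ, CQ.vars, hw0, hw1])
        simp [g, hw0, hw1, this]
  rw [CQ.bagAnswer, ← st17_bagSum_comp_inj g hinj _ (fun b hb => (hb (hsurj b)).elim)]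
  show bagSum _ = bagSum fun v => I.roleMult (Role.atomic P) (I.indMap a) v
  refine st17_bagSum_congr fun v => ?_
  simp [hq, zetaCQ, QAtom.mult, termVal, g, BagInterp.roleMult]

lemma st17_zeta_ex_inv (I : BagInterp) (P : AtomicRole) (a : Ind) :
    (zetaCQ (DLConcept.ex (Role.inv P))).bagAnswer I [a]
      = I.conceptMult (DLConcept.ex (Role.inv P)) (I.indMap a) := by
  set q := zetaCQ (DLConcept.ex (Role.inv P)) with hq
  let g : I.Δ → {f : Var → I.Δ //
      (∀ v, v ∉ q.vars → f v = I.indMap 0) ∧ q.answerVars.map f = [a].map I.indMap} :=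
    fun v => ⟨fun w => if w = 0 then I.indMap a else if w = 1 then v else I.indMap 0, by
      constructor
      · intro w hw
        have hw' : w ≠ 0 ∧ w ≠ 1 := by simpa [hq, zetaCQ, CQ.vars] using hw
        simp [hw'.1, hw'.2]
      · simp [hq, zetaCQ]⟩
  have hinj : Function.Injective g := by
    intro u v h
    have := congrFun (congrArg Subtype.val h) 1
    simpa [g] using this
  have hsurj : ∀ b, b ∈ Set.range g := by
    rintro ⟨f, hjunk, hans⟩
    refine ⟨f 1, Subtype.ext (funext fun w => ?_)⟩
    by_cases hw0 : w = 0
    · subst hw0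
      have : f 0 = I.indMap a := by simpa [hq, zetaCQ] using hans
      simp [g, this]
    · by_cases hw1 : w = 1
      · subst hw1; simp [g, hw0]
      · have : f w = I.indMap 0 := hjunk w (by simp [hq, zetaCQ, CQ.vars, hw0, hw1])
        simp [g, hw0, hw1, this]
  rw [CQ.bagAnswer, ← st17_bagSum_comp_inj g hinj _ (fun b hb => (hb (hsurj b)).elim)]
  show bagSum _ = bagSum fun v => I.roleMult (Role.inv P) (I.indMap a) v
  refine st17_bagSum_congr fun v => ?_
  simp [hq, zetaCQ, QAtom.mult, termVal, g, BagInterp.roleMult]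

lemma st17_zeta (I : BagInterp) (C : DLConcept) (a : Ind) :
    (zetaCQ C).bagAnswer I [a] = I.conceptMult C (I.indMap a) := by
  cases C with
  | atomic A => exact st17_zeta_atomic I A a
  | ex R =>
    cases R with
    | atomic P => exact st17_zeta_ex_atomic I P a
    | inv P => exact st17_zeta_ex_inv I P a

/-! Basic facts about the stages of the canonical model. -/

lemma st17_ind_mem_active (K : Ontology) : ∀ (i : ℕ) (a : Ind),
    CanElem.ind a ∈ (canStage K i).active
  | 0, a => ⟨a, rfl⟩
  | (i+1), a => Set.mem_union_left _ (st17_ind_mem_active K i a)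

lemma st17_active_mono (K : Ontology) (i : ℕ) :
    (canStage K i).active ⊆ (canStage K (i+1)).active :=
  Set.subset_union_left

lemma st17_support (K : Ontology) : ∀ i : ℕ,
    (∀ A u, (canStage K i).c A u ≠ 0 → u ∈ (canStage K i).active) ∧
    (∀ P u v, (canStage K i).r P u v ≠ 0 →
      u ∈ (canStage K i).active ∧ v ∈ (canStage K i).active) := by
  intro i
  induction i with
  | zero =>
    constructor
    · intro A u h
      cases u with
      | ind a => exact ⟨a, rfl⟩
      | anon w R j => exact absurd rfl h
    · intro P u v h
      cases u with
      | ind a =>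
        cases v with
        | ind b => exact ⟨⟨a, rfl⟩, ⟨b, rfl⟩⟩
        | anon w R j => exact absurd rfl h
      | anon w R j => exact absurd rfl h
  | succ i ih =>
    constructor
    · intro A u h
      have h' : (if u ∈ (canStage K i).active
          then (canStage K i).ccl K.tbox u (DLConcept.atomic A) else 0) ≠ 0 := h
      by_cases hu : u ∈ (canStage K i).active
      · exact st17_active_mono K i hu
      · rw [if_neg hu] at h'; exact absurd rfl h'
    · intro P u v h
      have h' : (if u ∈ (canStage K i).active ∧ v ∈ (canStage K i).active
          then (canStage K i).r P u v
          else if ∃ j, v = CanElem.anon u (Role.atomic P) j ∧ (canStage K i).NewAnon K.tbox v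
            then 1
          else if ∃ j, u = CanElem.anon v (Role.inv P) j ∧ (canStage K i).NewAnon K.tbox u
            then 1
          else 0) ≠ 0 := h
      by_cases h1 : u ∈ (canStage K i).active ∧ v ∈ (canStage K i).active
      · exact ⟨st17_active_mono K i h1.1, st17_active_mono K i h1.2⟩
      rw [if_neg h1] at h'
      by_cases h2 : ∃ j, v = CanElem.anon u (Role.atomic P) j ∧ (canStage K i).NewAnon K.tbox v
      · obtain ⟨j, hv, hNA⟩ := h2
        have hvmem : v ∈ (canStage K (i+1)).active := Set.mem_union_right _ hNA
        obtain ⟨u', R', j', heq, hu', -⟩ := hNA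
        rw [hv] at heq
        obtain ⟨h1', -, -⟩ := CanElem.anon.inj heq
        exact ⟨st17_active_mono K i (h1'.symm ▸ hu'), hvmem⟩
      rw [if_neg h2] at h'
      by_cases h3 : ∃ j, u = CanElem.anon v (Role.inv P) j ∧ (canStage K i).NewAnon K.tbox u
      · obtain ⟨j, hu, hNA⟩ := h3
        have humem : u ∈ (canStage K (i+1)).active := Set.mem_union_right _ hNA
        obtain ⟨u', R', j', heq, hu', -⟩ := hNA
        rw [hu] at heq
        obtain ⟨h1', -, -⟩ := CanElem.anon.inj heq
        exact ⟨humem, st17_active_mono K i (h1'.symm ▸ hu')⟩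
      rw [if_neg h3] at h'
      exact absurd rfl h'

lemma st17_c_mono (K : Ontology) (i : ℕ) (A : AtomicConcept) (u : CanElem) :
    (canStage K i).c A u ≤ (canStage K (i+1)).c A u := by
  by_cases h : (canStage K i).c A u = 0
  · rw [h]; exact zero_le
  · have hu := (st17_support K i).1 A u h
    show (canStage K i).c A u ≤ if u ∈ (canStage K i).active
      then (canStage K i).ccl K.tbox u (DLConcept.atomic A) else 0
    rw [if_pos hu]
    exact st17_le_cclI K.tbox (canStage K i).toInterp (DLConcept.atomic A) u

lemma st17_r_mono (K : Ontology) (i : ℕ) (P : AtomicRole) (u v : CanElem) :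
    (canStage K i).r P u v ≤ (canStage K (i+1)).r P u v := by
  by_cases h : (canStage K i).r P u v = 0
  · rw [h]; exact zero_le
  · obtain ⟨hu, hv⟩ := (st17_support K i).2 P u v h
    show (canStage K i).r P u v ≤ if u ∈ (canStage K i).active ∧ v ∈ (canStage K i).active
      then (canStage K i).r P u v
      else if ∃ j, v = CanElem.anon u (Role.atomic P) j ∧ (canStage K i).NewAnon K.tbox v then 1
      else if ∃ j, u = CanElem.anon v (Role.inv P) j ∧ (canStage K i).NewAnon K.tbox u then 1
      else 0
    rw [if_pos ⟨hu, hv⟩]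

lemma st17_roleMult_support (K : Ontology) (i : ℕ) (R : Role) (u v : CanElem)
    (h : (canStage K i).toInterp.roleMult R u v ≠ 0) :
    u ∈ (canStage K i).active ∧ v ∈ (canStage K i).active := by
  cases R with
  | atomic P => exact (st17_support K i).2 P u v h
  | inv P => exact ((st17_support K i).2 P v u h).symm

/-- The successor-stage role multiplicities out of an individual. -/
lemma st17_step_roleMult_ind (K : Ontology) (i : ℕ) (R : Role) (a : Ind) (v : CanElem) :
    (canStage K (i+1)).toInterp.roleMult R (CanElem.ind a) v
      = (if v ∈ (canStage K i).active
          then (canStage K i).toInterp.roleMult R (CanElem.ind a) v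
          else if ∃ j : ℕ, v = CanElem.anon (CanElem.ind a) R j ∧
              (canStage K i).NewAnon K.tbox v then 1 else 0) := by
  have ha := st17_ind_mem_active K i a
  cases R with
  | atomic P =>
    show (if CanElem.ind a ∈ (canStage K i).active ∧ v ∈ (canStage K i).active
        then (canStage K i).r P (CanElem.ind a) v
        else if ∃ j, v = CanElem.anon (CanElem.ind a) (Role.atomic P) j ∧
            (canStage K i).NewAnon K.tbox v then 1
        else if ∃ j, CanElem.ind a = CanElem.anon v (Role.inv P) j ∧
            (canStage K i).NewAnon K.tbox (CanElem.ind a) then 1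
        else 0) = _
    by_cases hv : v ∈ (canStage K i).active
    · rw [if_pos ⟨ha, hv⟩, if_pos hv]
      rfl
    · rw [if_neg (fun hc => hv hc.2), if_neg hv]
      have h3 : ¬ ∃ j, CanElem.ind a = CanElem.anon v (Role.inv P) j ∧
          (canStage K i).NewAnon K.tbox (CanElem.ind a) := by
        rintro ⟨j, hj, -⟩
        exact CanElem.noConfusion hj
      by_cases h2 : ∃ j, v = CanElem.anon (CanElem.ind a) (Role.atomic P) j ∧
          (canStage K i).NewAnon K.tbox v
      · rw [if_pos h2, if_pos h2]
      · rw [if_neg h2, if_neg h2, if_neg h3]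
  | inv P =>
    show (if v ∈ (canStage K i).active ∧ CanElem.ind a ∈ (canStage K i).active
        then (canStage K i).r P v (CanElem.ind a)
        else if ∃ j, CanElem.ind a = CanElem.anon v (Role.atomic P) j ∧
            (canStage K i).NewAnon K.tbox (CanElem.ind a) then 1
        else if ∃ j, v = CanElem.anon (CanElem.ind a) (Role.inv P) j ∧
            (canStage K i).NewAnon K.tbox v then 1
        else 0) = _
    by_cases hv : v ∈ (canStage K i).active
    · rw [if_pos ⟨hv, ha⟩, if_pos hv]
      rfl
    · rw [if_neg (fun hc => hv hc.1), if_neg hv]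
      have h2 : ¬ ∃ j, CanElem.ind a = CanElem.anon v (Role.atomic P) j ∧
          (canStage K i).NewAnon K.tbox (CanElem.ind a) := by
        rintro ⟨j, hj, -⟩
        exact CanElem.noConfusion hj
      rw [if_neg h2]

/-- The successor-stage atomic-concept multiplicities on active elements. -/
lemma st17_step_c (K : Ontology) (i : ℕ) (A : AtomicConcept) (u : CanElem)
    (hu : u ∈ (canStage K i).active) :
    (canStage K (i+1)).c A u = cclI K.tbox (canStage K i).toInterp (DLConcept.atomic A) u := by
  show (if u ∈ (canStage K i).active
      then (canStage K i).ccl K.tbox u (DLConcept.atomic A) else 0) = _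
  rw [if_pos hu]
  rfl

/-- Stage one computes the concept closure of the initial stage on `∃R`-concepts. -/
lemma st17_stage_one_ex (K : Ontology) (R : Role) (a : Ind) :
    (canStage K 1).toInterp.conceptMult (DLConcept.ex R) (CanElem.ind a)
      = cclI K.tbox (canStage K 0).toInterp (DLConcept.ex R) (CanElem.ind a) := by
  set δ := (canStage K 0).delta K.tbox (CanElem.ind a) R with hδ
  have hpt : ∀ v, (canStage K 1).toInterp.roleMult R (CanElem.ind a) v
      = (canStage K 0).toInterp.roleMult R (CanElem.ind a) v
        + (if ∃ j : ℕ, v = CanElem.anon (CanElem.ind a) R j ∧ (j : ℕ∞) < δ then 1 else 0) := by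
    intro (v : CanElem)
    refine (st17_step_roleMult_ind K 0 R a v).trans ?_
    by_cases hv : v ∈ (canStage K 0).active
    · rw [if_pos hv]
      obtain ⟨b, rfl⟩ := hv
      rw [if_neg, add_zero]
      rintro ⟨j, hj, -⟩
      exact CanElem.noConfusion hj
    · rw [if_neg hv]
      have h0 : (canStage K 0).toInterp.roleMult R (CanElem.ind a) v = 0 := by
        by_contra hc
        exact hv (st17_roleMult_support K 0 R _ _ hc).2
      rw [h0, zero_add]
      refine if_congr ⟨?_, ?_⟩ rfl rfl
      · rintro ⟨j, hvj, hNA⟩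
        obtain ⟨u', R', j', heq, -, hlt⟩ := hNA
        rw [hvj] at heq
        obtain ⟨h1, h2, h3⟩ := CanElem.anon.inj heq
        subst h3
        subst h2
        rw [← h1] at hlt
        exact ⟨j, hvj, hlt⟩
      · rintro ⟨j, hvj, hlt⟩
        exact ⟨j, hvj, CanElem.ind a, R, j, hvj, st17_ind_mem_active K 0 a, hlt⟩
  have hinj : Function.Injective (fun j : ℕ => CanElem.anon (CanElem.ind a) R j) :=
    fun j k h => (CanElem.anon.inj h).2.2
  have h0 : ∀ b, b ∉ Set.range (fun j : ℕ => CanElem.anon (CanElem.ind a) R j) →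
      (if ∃ j : ℕ, b = CanElem.anon (CanElem.ind a) R j ∧ (j : ℕ∞) < δ then (1 : ℕ∞) else 0)
        = 0 := by
    intro b hb
    rw [if_neg]
    rintro ⟨j, hbj, -⟩
    exact hb ⟨j, hbj.symm⟩
  calc (canStage K 1).toInterp.conceptMult (DLConcept.ex R) (CanElem.ind a)
      = bagSum (fun v => (canStage K 0).toInterp.roleMult R (CanElem.ind a) v
          + (if ∃ j : ℕ, v = CanElem.anon (CanElem.ind a) R j ∧ (j : ℕ∞) < δ then 1 else 0)) :=
        st17_bagSum_congr hpt
    _ = (canStage K 0).toInterp.conceptMult (DLConcept.ex R) (CanElem.ind a) + δ := by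
        rw [st17_bagSum_add]
        congr 1
        refine ((st17_bagSum_comp_inj (fun j : ℕ => CanElem.anon (CanElem.ind a) R j) hinj
          (fun v => if ∃ j : ℕ, v = CanElem.anon (CanElem.ind a) R j ∧ (j : ℕ∞) < δ
            then (1 : ℕ∞) else 0) h0).symm.trans ?_)
        calc bagSum (fun j : ℕ => if ∃ j' : ℕ,
                CanElem.anon (CanElem.ind a) R j = CanElem.anon (CanElem.ind a) R j' ∧
                  (j' : ℕ∞) < δ then (1 : ℕ∞) else 0)
            = bagSum (fun j : ℕ => if (j : ℕ∞) < δ then (1 : ℕ∞) else 0) := by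
              refine st17_bagSum_congr fun j => ?_
              refine if_congr ⟨?_, ?_⟩ rfl rfl
              · rintro ⟨j', heq, hlt⟩
                obtain ⟨-, -, h3⟩ := CanElem.anon.inj heq
                exact h3 ▸ hlt
              · intro hlt
                exact ⟨j, rfl, hlt⟩
          _ = δ := st17_bagSum_indicator δ
    _ = cclI K.tbox (canStage K 0).toInterp (DLConcept.ex R) (CanElem.ind a) := by
        show (canStage K 0).toInterp.conceptMult (DLConcept.ex R) (CanElem.ind a)
            + (cclI K.tbox (canStage K 0).toInterp (DLConcept.ex R) (CanElem.ind a)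
              - (canStage K 0).toInterp.conceptMult (DLConcept.ex R) (CanElem.ind a)) = _
        exact add_tsub_cancel_of_le (st17_le_cclI _ _ _ _)

/-- All stages `≥ 1` of the canonical model compute the concept closure of the
initial stage at individuals. -/
lemma st17_exact_val (K : Ontology) :
    ∀ (i : ℕ) (C : DLConcept) (a : Ind),
      (canStage K (i+1)).toInterp.conceptMult C (CanElem.ind a)
        = cclI K.tbox (canStage K 0).toInterp C (CanElem.ind a) := by
  intro i
  induction i with
  | zero =>
    intro C a
    cases C with
    | atomic A => exact st17_step_c K 0 A _ (st17_ind_mem_active K 0 a)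
    | ex R => exact st17_stage_one_ex K R a
  | succ j ih =>
    have hccl : ∀ (C : DLConcept) (a : Ind),
        cclI K.tbox (canStage K (j+1)).toInterp C (CanElem.ind a)
          = cclI K.tbox (canStage K 0).toInterp C (CanElem.ind a) := by
      intro C a
      refine le_antisymm (iSup_le ?_) (iSup_le ?_)
      · rintro ⟨C₀, h₀⟩
        rw [ih C₀ a]
        exact iSup_le fun C₁ => le_iSup
          (fun C₂ : {C₂ : DLConcept // TBox.EntailsCI K.tbox C₂ C} =>
            (canStage K 0).toInterp.conceptMult C₂.1 (CanElem.ind a))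
          ⟨C₁.1, st17_entails_trans C₁.2 h₀⟩
      · rintro ⟨C₀, h₀⟩
        calc (canStage K 0).toInterp.conceptMult C₀ (CanElem.ind a)
            ≤ cclI K.tbox (canStage K 0).toInterp C₀ (CanElem.ind a) := st17_le_cclI _ _ _ _
          _ = (canStage K (j+1)).toInterp.conceptMult C₀ (CanElem.ind a) := (ih C₀ a).symm
          _ ≤ _ := le_iSup (fun C₂ : {C₂ : DLConcept // TBox.EntailsCI K.tbox C₂ C} =>
              (canStage K (j+1)).toInterp.conceptMult C₂.1 (CanElem.ind a)) ⟨C₀, h₀⟩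
    intro C a
    cases C with
    | atomic A =>
      rw [show (canStage K (j+1+1)).toInterp.conceptMult (DLConcept.atomic A) (CanElem.ind a)
          = (canStage K (j+1+1)).c A (CanElem.ind a) from rfl,
        st17_step_c K (j+1) A _ (st17_ind_mem_active K (j+1) a), hccl]
    | ex R =>
      have hδ : (canStage K (j+1)).delta K.tbox (CanElem.ind a) R = 0 := by
        show cclI K.tbox (canStage K (j+1)).toInterp (DLConcept.ex R) (CanElem.ind a)
            - (canStage K (j+1)).toInterp.conceptMult (DLConcept.ex R) (CanElem.ind a) = 0
        rw [hccl, ih]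
        exact tsub_self _
      have hpt : ∀ v, (canStage K (j+1+1)).toInterp.roleMult R (CanElem.ind a) v
          = (canStage K (j+1)).toInterp.roleMult R (CanElem.ind a) v := by
        intro (v : CanElem)
        refine (st17_step_roleMult_ind K (j+1) R a v).trans ?_
        by_cases hv : v ∈ (canStage K (j+1)).active
        · rw [if_pos hv]
        · rw [if_neg hv, if_neg, eq_comm]
          · by_contra hc
            exact hv (st17_roleMult_support K (j+1) R _ _ hc).2
          · rintro ⟨jj, hvj, hNA⟩
            obtain ⟨u', R', j', heq, -, hlt⟩ := hNA
            rw [hvj] at heq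
            obtain ⟨h1, h2, h3⟩ := CanElem.anon.inj heq
            subst h3
            subst h2
            rw [← h1, hδ] at hlt
            exact absurd hlt (not_lt.mpr zero_le)
      show bagSum (fun v => (canStage K (j+1+1)).toInterp.roleMult R (CanElem.ind a) v) = _
      rw [st17_bagSum_congr hpt]
      exact ih (DLConcept.ex R) a

/-- The canonical model computes the concept closure of the initial stage at
individuals. -/
lemma st17_canInterp_conceptMult (K : Ontology) (C : DLConcept) (a : Ind) :
    (canInterp K).conceptMult C (CanElem.ind a)
      = cclI K.tbox (canStage K 0).toInterp C (CanElem.ind a) := by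
  cases C with
  | atomic A =>
    show (⨆ i, (canStage K i).c A (CanElem.ind a)) = _
    refine le_antisymm (iSup_le fun i => ?_) ?_
    · cases i with
      | zero =>
        exact st17_le_cclI K.tbox (canStage K 0).toInterp (DLConcept.atomic A) (CanElem.ind a)
      | succ j => exact (st17_exact_val K j (DLConcept.atomic A) a).le
    · rw [← st17_exact_val K 0 (DLConcept.atomic A) a]
      exact le_iSup (fun i => (canStage K i).c A (CanElem.ind a)) 1
  | ex R =>
    have hmono : ∀ v, Monotone fun i => (canStage K i).toInterp.roleMult R (CanElem.ind a) v := by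
      intro v
      refine monotone_nat_of_le_succ fun i => ?_
      cases R with
      | atomic P => exact st17_r_mono K i P _ v
      | inv P => exact st17_r_mono K i P v _
    have h1 : (canInterp K).conceptMult (DLConcept.ex R) (CanElem.ind a)
        = ⨆ i, (canStage K i).toInterp.conceptMult (DLConcept.ex R) (CanElem.ind a) := by
      show bagSum (fun v => (canInterp K).roleMult R (CanElem.ind a) v) = _
      have hpt : ∀ v, (canInterp K).roleMult R (CanElem.ind a) v
          = ⨆ i, (canStage K i).toInterp.roleMult R (CanElem.ind a) v := by
        intro v
        cases R with
        | atomic P => rfl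
        | inv P => rfl
      exact (st17_bagSum_congr hpt).trans
        (st17_bagSum_iSup (fun i v => (canStage K i).toInterp.roleMult R (CanElem.ind a) v) hmono)
    rw [h1]
    refine le_antisymm (iSup_le fun i => ?_) ?_
    · cases i with
      | zero =>
        exact st17_le_cclI K.tbox (canStage K 0).toInterp (DLConcept.ex R) (CanElem.ind a)
      | succ j => exact (st17_exact_val K j (DLConcept.ex R) a).le
    · rw [← st17_exact_val K 0 (DLConcept.ex R) a]
      exact le_iSup
        (fun i => (canStage K i).toInterp.conceptMult (DLConcept.ex R) (CanElem.ind a)) 1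

/-- The canonical model of `⟨∅,A⟩` and the initial stage of the canonical model
agree on concept multiplicities at individuals. -/
lemma st17_empty_eq_stage0 (K : Ontology) (C : DLConcept) (a : Ind) :
    (emptyCanInterp K.abox).conceptMult C a
      = (canStage K 0).toInterp.conceptMult C (CanElem.ind a) := by
  have hindinj : Function.Injective CanElem.ind := fun x y h => by cases h; rfl
  cases C with
  | atomic A => rfl
  | ex R =>
    cases R with
    | atomic P =>
      show bagSum (fun b : Ind => (emptyCanInterp K.abox).rI P a b)
          = bagSum (fun v => (canStage K 0).r P (CanElem.ind a) v)
      rw [← st17_bagSum_comp_inj CanElem.ind hindinj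
          (fun v => (canStage K 0).r P (CanElem.ind a) v) ?_]
      · rfl
      · intro v hv
        cases v with
        | ind b => exact absurd ⟨b, rfl⟩ hv
        | anon w R j => rfl
    | inv P =>
      show bagSum (fun b : Ind => (emptyCanInterp K.abox).rI P b a)
          = bagSum (fun v => (canStage K 0).r P v (CanElem.ind a))
      rw [← st17_bagSum_comp_inj CanElem.ind hindinj
          (fun v => (canStage K 0).r P v (CanElem.ind a)) ?_]
      · rfl
      · intro v hv
        cases v with
        | ind b => exact absurd ⟨b, rfl⟩ hv
        | anon w R j => rfl

end St17Aux

/-- For a DL-Lite_core^bag ontology `K = ⟨T,A⟩`, a concept `C`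
and an individual `a`: the bag answer at `a` of the CQ `q_C(x) = ζ_C(x)` over
the canonical model `C(K)` equals the bag answer at `a` of the max-union query
`η_C(x) = ⋁_{T ⊨ C₀ ⊑ C} ζ_{C₀}(x)` over `C(⟨∅,A⟩)`. -/
theorem statement_17 (K : Ontology) (hcore : TBox.IsCore K.tbox)
    (C : DLConcept) (a : Ind) :
    (zetaCQ C).bagAnswer (canInterp K) [a]
      = ⨆ C₀ : {C₀ : DLConcept // TBox.EntailsCI K.tbox C₀ C},
          (zetaCQ C₀.1).bagAnswer (emptyCanInterp K.abox) [a] := by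
  calc (zetaCQ C).bagAnswer (canInterp K) [a]
      = (canInterp K).conceptMult C (CanElem.ind a) := st17_zeta (canInterp K) C a
    _ = cclI K.tbox (canStage K 0).toInterp C (CanElem.ind a) :=
        st17_canInterp_conceptMult K C a
    _ = ⨆ C₀ : {C₀ : DLConcept // TBox.EntailsCI K.tbox C₀ C},
          (zetaCQ C₀.1).bagAnswer (emptyCanInterp K.abox) [a] := by
        show (⨆ C₀ : {C₀ : DLConcept // TBox.EntailsCI K.tbox C₀ C},
            (canStage K 0).toInterp.conceptMult C₀.1 (CanElem.ind a)) = _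
        refine iSup_congr fun C₀ => ?_
        rw [st17_zeta (emptyCanInterp K.abox) C₀.1 a]
        exact (st17_empty_eq_stage0 K C₀.1 a).symm
end
end

section
/- Let K = ⟨T,A⟩ be a DL-Lite_core^bag ontology and R an atomic role. Then: (i) the multiplicity of every pair of individuals (a,b) in R under the canonical bag model satisfies R^{C(K)}(a,b) = R^{C(⟨∅,A⟩)}(a,b) = A(R(a,b)), and likewise for the inverse of R; and (ii) for the CQ q(x) = R(x,x) and every individual a, the bag answer q^{C(K)}(a) equals q^{C(⟨∅,A⟩)}(a). -/
/-!
Common formalization of the bag semantics of DL-Lite ontologies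
(Nikolaou et al., "The Bag Semantics of Ontology-Based Data Access").
-/

open scoped Classical

noncomputable section

lemma stage_active (K : Ontology) (a : Ind) : ∀ i, CanElem.ind a ∈ (canStage K i).active
  | 0 => ⟨a, rfl⟩
  | (i + 1) => Set.mem_union_left _ (stage_active K a i)

lemma stage_r (K : Ontology) (P : AtomicRole) (a b : Ind) :
    ∀ i, (canStage K i).r P (CanElem.ind a) (CanElem.ind b)
      = BagABox.mult K.abox (Assertion.roleA P a b)
  | 0 => rfl
  | (i + 1) => by
      show (PreInterp.step _ _).r P _ _ = _
      rw [PreInterp.step]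
      dsimp only
      rw [if_pos ⟨stage_active K a i, stage_active K b i⟩]
      exact stage_r K P a b i

lemma canInterp_rI (K : Ontology) (P : AtomicRole) (a b : Ind) :
    (canInterp K).rI P (CanElem.ind a) (CanElem.ind b)
      = BagABox.mult K.abox (Assertion.roleA P a b) := by
  show (⨆ i, (canStage K i).r P (CanElem.ind a) (CanElem.ind b)) = _
  simp only [stage_r]
  exact iSup_const

lemma bagSum_unique {α : Type*} [Unique α] (f : α → ℕ∞) : bagSum f = f default := by
  refine le_antisymm (iSup_le fun s => ?_) (le_trans ?_ (le_iSup _ ({default} : Finset α)))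
  · calc ∑ x ∈ s, f x ≤ ∑ x ∈ ({default} : Finset α), f x :=
          Finset.sum_le_sum_of_subset (fun x _ => by simp [Unique.eq_default x])
      _ = f default := Finset.sum_singleton _ _
  · rw [Finset.sum_singleton]

lemma bagAnswer_selfCQ (I : BagInterp) (P : AtomicRole) (a : Ind) :
    (selfCQ P).bagAnswer I [a] = I.rI P (I.indMap a) (I.indMap a) := by
  have hvars : (selfCQ P).vars = [0] := rfl
  set prop : (Var → I.Δ) → Prop := fun f =>
    (∀ v, v ∉ (selfCQ P).vars → f v = I.indMap 0) ∧
      (selfCQ P).answerVars.map f = [a].map I.indMap with hprop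
  have hx : prop (fun v => match v with | 0 => I.indMap a | _ => I.indMap 0) := by
    constructor
    · intro v hv
      have hne : v ≠ 0 := by simpa [hvars] using hv
      match v, hne with
      | (n+1), _ => rfl
    · simp [selfCQ]
  have huniq : ∀ f g : {f : Var → I.Δ // prop f}, f = g := by
    rintro ⟨f, hf1, hf2⟩ ⟨g, hg1, hg2⟩
    apply Subtype.ext
    funext v
    show f v = g v
    by_cases hv : v = 0
    · subst hv
      have h1 : f 0 = I.indMap a := by simpa [selfCQ] using hf2
      have h2 : g 0 = I.indMap a := by simpa [selfCQ] using hg2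
      rw [h1, h2]
    · rw [hf1 v (by simp [hvars, hv]), hg1 v (by simp [hvars, hv])]
  letI : Unique {f : Var → I.Δ // prop f} :=
    { default := ⟨_, hx⟩, uniq := fun f => huniq f _ }
  show bagSum (fun f : {f : Var → I.Δ // prop f} =>
      ((selfCQ P).atoms.map (QAtom.mult I f.1)).prod) = _
  rw [bagSum_unique]
  have hd : ((default : {f : Var → I.Δ // prop f}) : Var → I.Δ) 0 = I.indMap a := rfl
  simp [selfCQ, QAtom.mult, termVal, hd]

/-- For a DL-Lite_core^bag ontology `K = ⟨T,A⟩` and an atomic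
role `P`: (i) the multiplicity of every pair of individuals `(a,b)` in `P` (and
in its inverse) under `C(K)` agrees with its multiplicity under `C(⟨∅,A⟩)`,
namely `A(P(a,b))`; and (ii) for the CQ `q(x) = P(x,x)` and every individual
`a`, the bag answer `q^{C(K)}(a)` equals `q^{C(⟨∅,A⟩)}(a)`. -/
theorem statement_18 (K : Ontology) (hcore : TBox.IsCore K.tbox)
    (P : AtomicRole) :
    (∀ a b : Ind,
      (canInterp K).rI P (CanElem.ind a) (CanElem.ind b)
          = BagABox.mult K.abox (Assertion.roleA P a b) ∧
      (emptyCanInterp K.abox).rI P a b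
          = BagABox.mult K.abox (Assertion.roleA P a b) ∧
      (canInterp K).roleMult (Role.inv P) (CanElem.ind a) (CanElem.ind b)
          = BagABox.mult K.abox (Assertion.roleA P b a) ∧
      (emptyCanInterp K.abox).roleMult (Role.inv P) a b
          = BagABox.mult K.abox (Assertion.roleA P b a)) ∧
    (∀ a : Ind,
      (selfCQ P).bagAnswer (canInterp K) [a]
        = (selfCQ P).bagAnswer (emptyCanInterp K.abox) [a]) := by
  constructor
  · intro a b
    refine ⟨canInterp_rI K P a b, rfl, ?_, rfl⟩
    show (canInterp K).rI P (CanElem.ind b) (CanElem.ind a) = _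
    exact canInterp_rI K P b a
  · intro a
    rw [bagAnswer_selfCQ, bagAnswer_selfCQ]
    show (canInterp K).rI P (CanElem.ind a) (CanElem.ind a)
      = BagABox.mult K.abox (Assertion.roleA P a a)
    exact canInterp_rI K P a a
end
end
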